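/- arXiv:1508.02407 — 5 statements merged into one kernel-verified Lean document; each statement's English description precedes it below -/
import Mathlib

section
/- For any positive integers K_1,…,K_r, P and any real a ≥ 1, we have C(P-⌈aK_i⌉, K_j)/C(P, K_j) ≤ (C(P-K_i, K_j)/C(P, K_j))^a for all i,j = 1,…,r. -/
open Finset

lemma ratio_eq (N P k : ℕ) (hk : k ≤ N) (hNP : N ≤ P) :
    ((N.choose k : ℝ)) / ((P.choose k : ℝ)) =
      ∏ t ∈ range k, (((N : ℝ) - t) / ((P : ℝ) - t)) := by
  have hdN : (N.descFactorial k : ℝ) = ∏ t ∈ range k, ((N : ℝ) - t) := by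
    rw [Nat.descFactorial_eq_prod_range, Nat.cast_prod]
    exact Finset.prod_congr rfl fun t ht => by
      rw [Nat.cast_sub (le_of_lt (lt_of_lt_of_le (mem_range.mp ht) hk))]
  have hdP : (P.descFactorial k : ℝ) = ∏ t ∈ range k, ((P : ℝ) - t) := by
    rw [Nat.descFactorial_eq_prod_range, Nat.cast_prod]
    exact Finset.prod_congr rfl fun t ht => by
      rw [Nat.cast_sub (le_of_lt (lt_of_lt_of_le (mem_range.mp ht) (hk.trans hNP)))]
  have hfact : (0:ℝ) < k.factorial := by positivity
  have h1 : ((N.descFactorial k : ℝ)) / ((P.descFactorial k : ℝ)) =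
      ((N.choose k : ℝ)) / ((P.choose k : ℝ)) := by
    rw [Nat.descFactorial_eq_factorial_mul_choose, Nat.descFactorial_eq_factorial_mul_choose]
    push_cast
    rw [mul_div_mul_left _ _ (ne_of_gt hfact)]
  rw [← h1, hdN, hdP, ← Finset.prod_div_distrib]

theorem stmt3 (P Ki Kj : ℕ) (hKi : 0 < Ki) (hKj : 0 < Kj) (hP : 0 < P)
    (hKiP : Ki ≤ P) (hKjP : Kj ≤ P) (a : ℝ) (ha : 1 ≤ a) :
    (((P - ⌈a * (Ki : ℝ)⌉₊).choose Kj : ℝ)) / ((P.choose Kj : ℝ)) ≤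
      ((((P - Ki).choose Kj : ℝ)) / ((P.choose Kj : ℝ))) ^ a := by
  set n : ℕ := ⌈a * (Ki : ℝ)⌉₊ with hn
  have hKin : Ki ≤ n := by
    have : (Ki : ℝ) ≤ a * Ki := le_mul_of_one_le_left (by positivity) ha
    calc Ki = ⌈(Ki : ℝ)⌉₊ := by simp
    _ ≤ n := Nat.ceil_le_ceil this
  have hPKj : (0:ℝ) < P.choose Kj := by
    exact_mod_cast Nat.choose_pos hKjP
  have hRHSnn : (0:ℝ) ≤ ((((P - Ki).choose Kj : ℝ)) / ((P.choose Kj : ℝ))) ^ a := by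
    apply Real.rpow_nonneg; positivity
  by_cases hc : Kj ≤ P - n
  · -- main case: Kj + n ≤ P
    have hnP : n ≤ P := le_trans (Nat.le_add_left n Kj) (by omega)
    have hKjPn : Kj ≤ P - Ki := by omega
    rw [ratio_eq _ _ _ hc (Nat.sub_le _ _), ratio_eq _ _ _ hKjPn (Nat.sub_le _ _)]
    rw [← Real.finset_prod_rpow]
    · apply Finset.prod_le_prod
      · intro t ht
        have ht' : t < Kj := mem_range.mp ht
        have h1 : (n : ℝ) + t ≤ P := by
          have : n + t ≤ P := by omega
          exact_mod_cast this
        have h2 : (t : ℝ) < P := by exact_mod_cast (by omega : t < P)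
        rw [Nat.cast_sub hnP]
        apply div_nonneg (by linarith) (by linarith)
      · intro t ht
        have ht' : t < Kj := mem_range.mp ht
        rw [Nat.cast_sub hnP, Nat.cast_sub hKiP]
        set Q : ℝ := (P : ℝ) - t with hQ
        have hQpos : (0:ℝ) < Q := by
          have : (t:ℝ) < P := by exact_mod_cast (by omega : t < P)
          simp [hQ]; linarith
        have hKiQ : (Ki : ℝ) ≤ Q := by
          have : Ki + t ≤ P := by omega
          have : (Ki : ℝ) + t ≤ P := by exact_mod_cast this
          simp [hQ]; linarith
        have han : a * Ki ≤ (n : ℝ) := Nat.le_ceil _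
        have hbern : 1 + a * (-(Ki / Q)) ≤ (1 + (-(Ki / Q))) ^ a := by
          apply one_add_mul_self_le_rpow_one_add _ ha
          rw [neg_le, neg_neg]
          exact div_le_one_of_le₀ hKiQ hQpos.le
        have heq1 : (1 : ℝ) + (-(Ki / Q)) = (Q - Ki) / Q := by
          field_simp; ring
        have heq2 : ((P:ℝ) - Ki - t) / Q = (Q - Ki) / Q := by rw [hQ]; ring
        rw [heq2, ← heq1]
        refine le_trans ?_ hbern
        have heq3 : (1:ℝ) + a * (-((Ki:ℝ) / Q)) = (Q - a * Ki) / Q := by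
          field_simp; ring
        rw [heq3, div_le_div_iff₀ hQpos hQpos]
        nlinarith [hQpos.le]
    · intro t ht
      have ht' : t < Kj := mem_range.mp ht
      rw [Nat.cast_sub hKiP]
      have h1 : (Ki : ℝ) + t ≤ P := by exact_mod_cast (by omega : Ki + t ≤ P)
      have h2 : (t : ℝ) < P := by exact_mod_cast (by omega : t < P)
      apply div_nonneg (by linarith) (by linarith)
  · -- choose is zero
    have : (P - n).choose Kj = 0 := Nat.choose_eq_zero_of_lt (by omega)
    rw [this]
    simpa using hRHSnn
end

section
/- Consider sequences of positive integers K_{i,n}, K_{j,n}, P_n with K_{i,n}, K_{j,n} ≤ P_n, and let p_{ij}(n) = 1 - C(P_n - K_{i,n}, K_{j,n})/C(P_n, K_{j,n}). Then p_{ij}(n) → 0 as n → ∞ if and only if K_{i,n}K_{j,n}/P_n → 0, and under either condition p_{ij}(n) ~ K_{i,n}K_{j,n}/P_n (i.e., their ratio tends to 1). -/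
open Filter Finset

lemma weier (k : ℕ) (f : ℕ → ℝ) (h0 : ∀ i < k, 0 ≤ f i) (h1 : ∀ i < k, f i ≤ 1) :
    1 - ∑ i ∈ range k, f i ≤ ∏ i ∈ range k, (1 - f i) := by
  induction k with
  | zero => simp
  | succ n ih =>
    rw [Finset.prod_range_succ, Finset.sum_range_succ]
    have hp : (0:ℝ) ≤ ∏ i ∈ range n, (1 - f i) :=
      Finset.prod_nonneg (fun i hi => sub_nonneg.mpr (h1 i (by simpa using Nat.lt_succ_of_lt (mem_range.mp hi))))
    have hs : (0:ℝ) ≤ ∑ i ∈ range n, f i :=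
      Finset.sum_nonneg (fun i hi => h0 i (Nat.lt_succ_of_lt (mem_range.mp hi)))
    have ih' := ih (fun i hi => h0 i (Nat.lt_succ_of_lt hi)) (fun i hi => h1 i (Nat.lt_succ_of_lt hi))
    nlinarith [h0 n (Nat.lt_succ_self n), h1 n (Nat.lt_succ_self n)]

lemma ratio_eq_s6 (a b p : ℕ) (h : a + b ≤ p) :
    ((p - a).choose b : ℝ) / ((p).choose b : ℝ)
      = ∏ t ∈ range b, (1 - (a : ℝ) / ((p : ℝ) - t)) := by
  have hb : ∀ t ∈ range b, (t : ℝ) < (p : ℝ) := by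
    intro t ht
    have := mem_range.mp ht
    exact_mod_cast lt_of_lt_of_le (Nat.lt_of_lt_of_le this (Nat.le_add_left b a)) h
  have h1 : ((p - a).choose b : ℝ) = (∏ t ∈ range b, ((p : ℝ) - a - t)) / (Nat.factorial b : ℝ) := by
    rw [eq_div_iff (by exact_mod_cast (Nat.factorial_ne_zero b))]
    have := Nat.descFactorial_eq_factorial_mul_choose (p - a) b
    have h2 : ((p - a).descFactorial b : ℝ) = ∏ t ∈ range b, ((p : ℝ) - a - t) := by
      rw [Nat.descFactorial_eq_prod_range]
      push_cast
      refine Finset.prod_congr rfl fun t ht => ?_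
      have htb : t < b := mem_range.mp ht
      have : t ≤ p - a := le_trans (le_of_lt htb) (Nat.le_sub_of_add_le (by omega))
      rw [Nat.cast_sub this, Nat.cast_sub (by omega)]
    rw [← h2, this]
    push_cast; ring
  have h2 : ((p).choose b : ℝ) = (∏ t ∈ range b, ((p : ℝ) - t)) / (Nat.factorial b : ℝ) := by
    rw [eq_div_iff (by exact_mod_cast (Nat.factorial_ne_zero b))]
    have := Nat.descFactorial_eq_factorial_mul_choose p b
    have h2 : ((p).descFactorial b : ℝ) = ∏ t ∈ range b, ((p : ℝ) - t) := by
      rw [Nat.descFactorial_eq_prod_range]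
      push_cast
      refine Finset.prod_congr rfl fun t ht => ?_
      have htb : t < b := mem_range.mp ht
      rw [Nat.cast_sub (by omega)]
    rw [← h2, this]
    push_cast; ring
  have hfac : (Nat.factorial b : ℝ) ≠ 0 := by exact_mod_cast Nat.factorial_ne_zero b
  rw [h1, h2, div_div_div_comm, div_self hfac, div_one, ← Finset.prod_div_distrib]
  refine Finset.prod_congr rfl fun t ht => ?_
  have hpt : (0:ℝ) < (p:ℝ) - t := sub_pos.mpr (hb t ht)
  field_simp
  ring

lemma upperb (a b p : ℕ) (ha : 0 < a) (hb : 0 < b) (hp : 0 < p)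
    (hx : (a : ℝ) * b / p ≤ 1/2) :
    1 - ((p - a).choose b : ℝ) / ((p).choose b : ℝ)
      ≤ ((a : ℝ) * b / p) / (1 - (a : ℝ) * b / p) := by
  have hpR : (0:ℝ) < p := by exact_mod_cast hp
  have haR : (1:ℝ) ≤ a := by exact_mod_cast ha
  have hbR : (1:ℝ) ≤ b := by exact_mod_cast hb
  have hab : (a : ℝ) * b ≤ (p:ℝ) / 2 := by
    rw [div_le_iff₀ hpR] at hx; linarith
  have hsum : a + b ≤ p := by
    have : ((a + b : ℕ) : ℝ) ≤ (p : ℝ) := by push_cast; nlinarith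
    exact_mod_cast this
  rw [ratio_eq_s6 a b p hsum]
  have hbp : (b:ℝ) ≤ (p:ℝ) := by
    have : b ≤ p := by omega
    exact_mod_cast this
  have key : 1 - ∏ t ∈ range b, (1 - (a : ℝ) / ((p : ℝ) - t))
      ≤ ∑ t ∈ range b, (a : ℝ) / ((p : ℝ) - t) := by
    have := weier b (fun t => (a : ℝ) / ((p : ℝ) - t))
      (fun t htb => by
        have htb' : (t:ℝ) + 1 ≤ b := by exact_mod_cast htb
        have : (0:ℝ) < (p:ℝ) - t := by linarith
        positivity)
      (fun t htb => by
        have htb' : (t:ℝ) + 1 ≤ b := by exact_mod_cast htb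
        have hsumR : (a:ℝ) + b ≤ p := by exact_mod_cast hsum
        have h1 : (0:ℝ) < (p:ℝ) - t := by linarith
        rw [div_le_one h1]; linarith)
    linarith
  have hden : (0:ℝ) < (p : ℝ) - (a:ℝ)*(b:ℝ) + 1 := by nlinarith
  have hterm : ∀ t ∈ range b, (a : ℝ) / ((p : ℝ) - t) ≤ (a : ℝ) / ((p : ℝ) - (a:ℝ)*(b:ℝ) + 1) := by
    intro t ht
    have htb' : (t:ℝ) + 1 ≤ b := by exact_mod_cast (mem_range.mp ht)
    have hden2 : (p : ℝ) - (a:ℝ)*(b:ℝ) + 1 ≤ (p:ℝ) - t := by nlinarith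
    gcongr
  have hsumle : ∑ t ∈ range b, (a : ℝ) / ((p : ℝ) - t)
      ≤ (a:ℝ) * b / ((p : ℝ) - (a:ℝ)*(b:ℝ) + 1) := by
    calc ∑ t ∈ range b, (a : ℝ) / ((p : ℝ) - t)
        ≤ ∑ _t ∈ range b, (a : ℝ) / ((p : ℝ) - (a:ℝ)*(b:ℝ) + 1) :=
          Finset.sum_le_sum hterm
      _ = (a:ℝ) * b / ((p : ℝ) - (a:ℝ)*(b:ℝ) + 1) := by
          rw [Finset.sum_const, Finset.card_range, nsmul_eq_mul]; ring
  have hdab : (0:ℝ) < (p:ℝ) - (a:ℝ)*b := by nlinarith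
  have hrhs : ((a:ℝ)*b/p)/(1-(a:ℝ)*b/p) = (a:ℝ)*b/((p:ℝ)-(a:ℝ)*b) := by
    field_simp
  have hfin : (a:ℝ) * b / ((p : ℝ) - (a:ℝ)*(b:ℝ) + 1) ≤ (a:ℝ)*b/((p:ℝ)-(a:ℝ)*b) := by
    gcongr
    · nlinarith
  rw [hrhs]
  linarith

lemma lowerb (a b p : ℕ) (ha : 0 < a) (hb : 0 < b) (hp : 0 < p)
    (hap : a ≤ p) (hbp : b ≤ p) :
    ((a : ℝ) * b / p) / (1 + (a : ℝ) * b / p)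
      ≤ 1 - ((p - a).choose b : ℝ) / ((p).choose b : ℝ) := by
  have hpR : (0:ℝ) < p := by exact_mod_cast hp
  have haR : (1:ℝ) ≤ a := by exact_mod_cast ha
  have hbR : (1:ℝ) ≤ b := by exact_mod_cast hb
  have hx0 : (0:ℝ) ≤ (a:ℝ) * b / p := by positivity
  by_cases hcase : a + b ≤ p
  · rw [ratio_eq_s6 a b p hcase]
    have hapR : (a:ℝ) ≤ p := by exact_mod_cast hap
    have hy1 : (a:ℝ)/p ≤ 1 := by rw [div_le_one hpR]; exact hapR
    have hy0 : (0:ℝ) ≤ (a:ℝ)/p := by positivity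
    have hprod : ∏ t ∈ range b, (1 - (a : ℝ) / ((p : ℝ) - t)) ≤ (1 - (a:ℝ)/p) ^ b := by
      have hcard := Finset.card_range b
      calc ∏ t ∈ range b, (1 - (a : ℝ) / ((p : ℝ) - t))
          ≤ ∏ _t ∈ range b, (1 - (a:ℝ)/p) := ?_
        _ = (1 - (a:ℝ)/p) ^ b := by rw [Finset.prod_const, Finset.card_range]
      apply Finset.prod_le_prod
      · intro t ht
        have htb' : (t:ℝ) + 1 ≤ b := by exact_mod_cast (mem_range.mp ht)
        have hsumR : (a:ℝ) + b ≤ p := by exact_mod_cast hcase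
        have hpt : (0:ℝ) < (p:ℝ) - t := by linarith
        have : (a:ℝ) / ((p:ℝ) - t) ≤ 1 := by rw [div_le_one hpt]; linarith
        linarith
      · intro t ht
        have htb' : (t:ℝ) + 1 ≤ b := by exact_mod_cast (mem_range.mp ht)
        have hbpR : (b:ℝ) ≤ (p:ℝ) := by exact_mod_cast hbp
        have hpt : (0:ℝ) < (p:ℝ) - t := by linarith
        have : (a:ℝ)/p ≤ (a:ℝ)/((p:ℝ) - t) := by gcongr <;> linarith
        linarith
    have hbern : 1 + (b:ℝ) * ((a:ℝ)/p) ≤ (1 + (a:ℝ)/p) ^ b :=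
      one_add_mul_le_pow (by linarith : (-2:ℝ) ≤ (a:ℝ)/p) b
    have hmul : (1 - (a:ℝ)/p) ^ b * (1 + (a:ℝ)/p) ^ b ≤ 1 := by
      rw [← mul_pow]
      apply pow_le_one₀
      · nlinarith
      · nlinarith
    have h1x : (0:ℝ) < 1 + (a:ℝ)*b/p := by linarith
    have hxy : (a:ℝ)*b/p = (b:ℝ) * ((a:ℝ)/p) := by ring
    have hpow : (1 - (a:ℝ)/p) ^ b ≤ 1 / (1 + (a:ℝ)*b/p) := by
      rw [le_div_iff₀ h1x]
      have hnn : (0:ℝ) ≤ (1 - (a:ℝ)/p) ^ b := pow_nonneg (by linarith) b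
      calc (1 - (a:ℝ)/p) ^ b * (1 + (a:ℝ)*b/p)
          ≤ (1 - (a:ℝ)/p) ^ b * (1 + (a:ℝ)/p) ^ b := by
            apply mul_le_mul_of_nonneg_left _ hnn
            rw [hxy]; exact hbern
        _ ≤ 1 := hmul
    have hid : ((a : ℝ) * b / p) / (1 + (a : ℝ) * b / p) = 1 - 1 / (1 + (a:ℝ)*b/p) := by
      field_simp; ring
    rw [hid]
    linarith
  · have hlt : p - a < b := by omega
    rw [Nat.choose_eq_zero_of_lt hlt]
    simp only [Nat.cast_zero, zero_div]
    rw [div_le_iff₀ (by linarith)]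
    linarith

theorem stmt6 (Ki Kj P : ℕ → ℕ)
    (hKi : ∀ n, 0 < Ki n) (hKj : ∀ n, 0 < Kj n) (hP : ∀ n, 0 < P n)
    (hle : ∀ n, Ki n ≤ P n ∧ Kj n ≤ P n) :
    (Tendsto (fun n => 1 - (((P n - Ki n).choose (Kj n) : ℝ)) / (((P n).choose (Kj n) : ℝ)))
        atTop (nhds 0)
      ↔ Tendsto (fun n => ((Ki n : ℝ) * (Kj n : ℝ)) / (P n : ℝ)) atTop (nhds 0)) ∧
    (Tendsto (fun n => 1 - (((P n - Ki n).choose (Kj n) : ℝ)) / (((P n).choose (Kj n) : ℝ)))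
        atTop (nhds 0) →
      Tendsto (fun n =>
          (1 - (((P n - Ki n).choose (Kj n) : ℝ)) / (((P n).choose (Kj n) : ℝ))) /
            (((Ki n : ℝ) * (Kj n : ℝ)) / (P n : ℝ)))
        atTop (nhds 1)) := by
  set x : ℕ → ℝ := fun n => ((Ki n : ℝ) * (Kj n : ℝ)) / (P n : ℝ) with hxdef
  set pp : ℕ → ℝ := fun n =>
    1 - (((P n - Ki n).choose (Kj n) : ℝ)) / (((P n).choose (Kj n) : ℝ)) with hppdef
  have hx0 : ∀ n, 0 < x n := fun n => by
    have h1 : (0:ℝ) < Ki n := by exact_mod_cast hKi n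
    have h2 : (0:ℝ) < Kj n := by exact_mod_cast hKj n
    have h3 : (0:ℝ) < P n := by exact_mod_cast hP n
    positivity
  have hlow : ∀ n, x n / (1 + x n) ≤ pp n := fun n =>
    lowerb (Ki n) (Kj n) (P n) (hKi n) (hKj n) (hP n) (hle n).1 (hle n).2
  have hup : ∀ n, x n ≤ 1/2 → pp n ≤ x n / (1 - x n) := fun n h =>
    upperb (Ki n) (Kj n) (P n) (hKi n) (hKj n) (hP n) h
  have hiff : Tendsto pp atTop (nhds 0) ↔ Tendsto x atTop (nhds 0) := by
    constructor
    · intro hpp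
      have ht : Tendsto (fun n => x n / (1 + x n)) atTop (nhds 0) := by
        apply tendsto_of_tendsto_of_tendsto_of_le_of_le tendsto_const_nhds hpp
        · intro n; positivity
        · exact hlow
      have h1 : Tendsto (fun n => 1 - x n / (1 + x n)) atTop (nhds 1) := by
        simpa using tendsto_const_nhds.sub ht
      have h2 : Tendsto (fun n => (x n / (1 + x n)) / (1 - x n / (1 + x n))) atTop (nhds 0) := by
        simpa [Pi.div_def] using ht.div h1 one_ne_zero
      have heq : ∀ n, (x n / (1 + x n)) / (1 - x n / (1 + x n)) = x n := by
        intro n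
        have h1x : (0:ℝ) < 1 + x n := by linarith [hx0 n]
        field_simp; ring
      simpa [funext heq] using h2
    · intro hx
      have hev : ∀ᶠ n in atTop, x n ≤ 1/2 :=
        hx.eventually (eventually_le_nhds (by norm_num))
      have h1 : Tendsto (fun n => 1 + x n) atTop (nhds 1) := by
        simpa using tendsto_const_nhds.add hx
      have h2 : Tendsto (fun n => 1 - x n) atTop (nhds 1) := by
        simpa using tendsto_const_nhds.sub hx
      have hlow0 : Tendsto (fun n => x n / (1 + x n)) atTop (nhds 0) := by
        simpa [Pi.div_def] using hx.div h1 one_ne_zero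
      have hup0 : Tendsto (fun n => x n / (1 - x n)) atTop (nhds 0) := by
        simpa [Pi.div_def] using hx.div h2 one_ne_zero
      exact tendsto_of_tendsto_of_tendsto_of_le_of_le' hlow0 hup0
        (Eventually.of_forall hlow) (hev.mono fun n h => hup n h)
  refine ⟨hiff, ?_⟩
  intro hpp
  have hx := hiff.mp hpp
  have hev : ∀ᶠ n in atTop, x n ≤ 1/2 :=
    hx.eventually (eventually_le_nhds (by norm_num))
  have h1 : Tendsto (fun n => 1 + x n) atTop (nhds 1) := by
    simpa using tendsto_const_nhds.add hx
  have h2 : Tendsto (fun n => 1 - x n) atTop (nhds 1) := by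
    simpa using tendsto_const_nhds.sub hx
  have hlowr : Tendsto (fun n => 1 / (1 + x n)) atTop (nhds 1) := by
    simpa [Pi.div_def, one_div] using (tendsto_const_nhds (x := (1:ℝ))).div h1 one_ne_zero
  have hupr : Tendsto (fun n => 1 / (1 - x n)) atTop (nhds 1) := by
    simpa [Pi.div_def, one_div] using (tendsto_const_nhds (x := (1:ℝ))).div h2 one_ne_zero
  apply tendsto_of_tendsto_of_tendsto_of_le_of_le' hlowr hupr
  · apply Eventually.of_forall
    intro n
    rw [le_div_iff₀ (hx0 n)]
    have hid : 1 / (1 + x n) * x n = x n / (1 + x n) := by ring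
    rw [hid]
    exact hlow n
  · refine hev.mono fun n h => ?_
    rw [div_le_iff₀ (hx0 n)]
    have hid : 1 / (1 - x n) * x n = x n / (1 - x n) := by ring
    rw [hid]
    exact hup n h
end

section
/- Under a scaling satisfying λ_1(n) ~ c (log n)/n for some c > 0, together with (K_{1,n})²/P_n = ω(1/n), it holds that K_{r,n}/K_{1,n} = o(log n) and (K_{r,n})²/P_n = o((log n)²/n). -/
open Filter

lemma mul_sub_ineq (n a k : ℕ) : (n - a - k) * n ≤ (n - k) * (n - a) := by
  rcases le_or_gt (a + k) n with h | h
  · zify [show k ≤ n - a by omega, show a ≤ n by omega, show k ≤ n by omega]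
    nlinarith [mul_nonneg (Int.natCast_nonneg a) (Int.natCast_nonneg k)]
  · have : n - a - k = 0 := by omega
    simp [this]

lemma choose_pow_le (n k : ℕ) : ∀ a : ℕ, (n - a).choose k * n ^ a ≤ n.choose k * (n - k) ^ a := by
  intro a
  induction a with
  | zero => simp
  | succ a ih =>
    rcases lt_or_ge (n - (a + 1)) k with h | h
    · rw [Nat.choose_eq_zero_of_lt h, zero_mul]; exact Nat.zero_le _
    · by_cases hna : n ≤ a
      · have hk0 : k = 0 := by omega
        subst hk0; simp
      have hm : 1 ≤ n - a := by omega
      have hid := Nat.choose_mul_succ_eq (n - a - 1) k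
      rw [Nat.sub_add_cancel hm] at hid
      apply Nat.le_of_mul_le_mul_right _ hm
      calc (n - (a + 1)).choose k * n ^ (a + 1) * (n - a)
          = ((n - a - 1).choose k * (n - a)) * (n ^ a * n) := by
            rw [show n - (a+1) = n - a - 1 by omega]; ring
        _ = ((n - a).choose k * (n - a - k)) * (n ^ a * n) := by rw [hid]
        _ = ((n - a).choose k * n ^ a) * ((n - a - k) * n) := by ring
        _ ≤ (n.choose k * (n - k) ^ a) * ((n - k) * (n - a)) :=
            Nat.mul_le_mul ih (mul_sub_ineq n a k)
        _ = n.choose k * (n - k) ^ (a + 1) * (n - a) := by ring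

lemma p_lower (Pn a k : ℕ) (hk : k < Pn) :
    ((a : ℝ) * k / Pn) / (1 + (a : ℝ) * k / Pn) ≤
      1 - ((Pn - a).choose k : ℝ) / ((Pn).choose k : ℝ) := by
  have hP : (0 : ℝ) < Pn := by exact_mod_cast (Nat.zero_le k).trans_lt hk
  have hch : (0 : ℝ) < ((Pn).choose k : ℝ) := by
    exact_mod_cast Nat.choose_pos hk.le
  set t : ℝ := (k : ℝ) / Pn with ht
  have ht0 : 0 ≤ t := by positivity
  have ht1 : t ≤ 1 := by rw [ht, div_le_one hP]; exact_mod_cast hk.le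
  have hkey := choose_pow_le Pn k a
  have hkey' : (((Pn - a).choose k : ℝ)) * (Pn : ℝ) ^ a ≤
      ((Pn).choose k : ℝ) * ((Pn : ℝ) - k) ^ a := by
    have := Nat.cast_le (α := ℝ) |>.mpr hkey
    push_cast [Nat.cast_sub hk.le] at this
    convert this using 2
  have hratio : ((Pn - a).choose k : ℝ) / ((Pn).choose k : ℝ) ≤ (1 - t) ^ a := by
    have h1t : (1 - t) = ((Pn : ℝ) - k) / Pn := by rw [ht]; field_simp
    rw [h1t, div_pow, div_le_div_iff₀ hch (by positivity)]
    linarith [hkey']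
  have hat : (a : ℝ) * k / Pn = (a : ℝ) * t := by rw [ht]; ring
  have hatpos : (0:ℝ) < 1 + (a:ℝ) * t := by positivity
  have hbern : 1 + (a : ℝ) * t ≤ (1 + t) ^ a := by
    have := one_add_mul_le_pow (a := t) (by linarith) a
    linarith [this]
  have hprod : (1 + t) ^ a * (1 - t) ^ a ≤ 1 := by
    rw [← mul_pow, show (1 + t) * (1 - t) = 1 - t ^ 2 by ring]
    apply pow_le_one₀ (by nlinarith) (by nlinarith)
  have hpow : (1 - t) ^ a ≤ 1 / (1 + (a:ℝ) * t) := by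
    rw [le_div_iff₀ hatpos]
    have h1 : (1 + (a:ℝ)*t) * (1 - t) ^ a ≤ (1 + t)^a * (1-t)^a :=
      mul_le_mul_of_nonneg_right hbern (pow_nonneg (by linarith) a)
    linarith
  rw [hat, show (a:ℝ) * t / (1 + (a:ℝ)*t) = 1 - 1 / (1 + (a:ℝ)*t) by
    field_simp; ring]
  linarith [hratio.trans hpow]

lemma min_le_ratio {x : ℝ} (hx : 0 ≤ x) : min x 1 / 2 ≤ x / (1 + x) := by
  rcases le_total x 1 with h | h
  · rw [min_eq_left h, div_le_div_iff₀ (by norm_num) (by linarith)]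
    nlinarith
  · rw [min_eq_right h, div_le_div_iff₀ (by norm_num) (by linarith)]
    nlinarith

open Filter

theorem stmt8 (r : ℕ) (μ : Fin (r + 1) → ℝ) (K : ℕ → Fin (r + 1) → ℕ) (P : ℕ → ℕ)
    (c : ℝ) (hc : 0 < c)
    (hμ : ∀ j, 0 < μ j) (hsum : ∑ j, μ j = 1)
    (hmono : ∀ n, Monotone (K n)) (hKP : ∀ n j, K n j < P n)
    (hK1 : ∀ n, 0 < K n 0)
    (hlam : Tendsto
      (fun n => (∑ j, μ j *
          (1 - (((P n - K n 0).choose (K n j) : ℝ)) / (((P n).choose (K n j) : ℝ)))) /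
        (c * Real.log n / n)) atTop (nhds 1))
    (homega : Tendsto (fun n => ((K n 0 : ℝ) ^ 2 / (P n : ℝ)) * n) atTop atTop) :
    Tendsto (fun n => ((K n (Fin.last r) : ℝ) / (K n 0 : ℝ)) / Real.log n) atTop (nhds 0) ∧
    Tendsto (fun n => ((K n (Fin.last r) : ℝ) ^ 2 / (P n : ℝ)) / ((Real.log n) ^ 2 / n))
      atTop (nhds 0) := by
  have hμr := hμ (Fin.last r)
  set C : ℝ := 4 * c / μ (Fin.last r) with hC
  have hCpos : 0 < C := by positivity
  have hlog : Tendsto (fun n : ℕ => Real.log n / (n : ℝ)) atTop (nhds 0) := by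
    have h := Real.isLittleO_log_id_atTop.tendsto_div_nhds_zero
    have := h.comp (tendsto_natCast_atTop_atTop (R := ℝ))
    exact this
  -- the key eventual bound on x n = K1 Kr / P
  have hEx : ∀ᶠ n : ℕ in atTop,
      (K n 0 : ℝ) * (K n (Fin.last r) : ℝ) / (P n : ℝ) ≤ C * (Real.log n / n) := by
    have h1 : ∀ᶠ n : ℕ in atTop,
        (fun n => (∑ j, μ j *
          (1 - (((P n - K n 0).choose (K n j) : ℝ)) / (((P n).choose (K n j) : ℝ)))) /
          (c * Real.log n / n)) n ≤ 2 :=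
      hlam.eventually (eventually_le_nhds one_lt_two)
    have h2 : ∀ᶠ n : ℕ in atTop, C * (Real.log n / n) < 1 := by
      have := hlog.const_mul C
      rw [mul_zero] at this
      exact this.eventually (eventually_lt_nhds zero_lt_one)
    filter_upwards [h1, h2, eventually_ge_atTop 2] with n hfg hC1 hn2
    have hn1 : (1 : ℝ) < n := by exact_mod_cast (by omega : 1 < n)
    have hL : 0 < Real.log n := Real.log_pos hn1
    have hN : (0 : ℝ) < n := by linarith
    have hg : 0 < c * Real.log n / n := by positivity
    have hK1n : (0 : ℝ) < (K n 0 : ℝ) := by exact_mod_cast hK1 n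
    have hKrn : (K n 0 : ℝ) ≤ (K n (Fin.last r) : ℝ) := by
      exact_mod_cast hmono n (Fin.zero_le (Fin.last r))
    have hPn : (0 : ℝ) < (P n : ℝ) := by exact_mod_cast (Nat.zero_le _).trans_lt (hKP n 0)
    set x : ℝ := (K n 0 : ℝ) * (K n (Fin.last r) : ℝ) / (P n : ℝ) with hx
    clear_value x
    have hx0 : 0 ≤ x := by rw [hx]; positivity
    have hf_le : (∑ j, μ j *
        (1 - (((P n - K n 0).choose (K n j) : ℝ)) / (((P n).choose (K n j) : ℝ))))
        ≤ 2 * (c * Real.log n / n) := by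
      have := (div_le_iff₀ hg).mp hfg
      linarith
    have hterm_nonneg : ∀ j ∈ Finset.univ, 0 ≤ μ j *
        (1 - (((P n - K n 0).choose (K n j) : ℝ)) / (((P n).choose (K n j) : ℝ))) := by
      intro j _
      apply mul_nonneg (hμ j).le
      have hchpos : (0 : ℝ) < ((P n).choose (K n j) : ℝ) := by
        exact_mod_cast Nat.choose_pos (hKP n j).le
      have hle : (((P n - K n 0).choose (K n j) : ℝ)) ≤ ((P n).choose (K n j) : ℝ) := by
        exact_mod_cast Nat.choose_le_choose (K n j) (Nat.sub_le _ _)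
      have := (div_le_one hchpos).mpr hle
      linarith
    have hsingle : μ (Fin.last r) *
        (1 - (((P n - K n 0).choose (K n (Fin.last r)) : ℝ)) /
          (((P n).choose (K n (Fin.last r)) : ℝ)))
        ≤ ∑ j, μ j *
        (1 - (((P n - K n 0).choose (K n j) : ℝ)) / (((P n).choose (K n j) : ℝ))) :=
      Finset.single_le_sum hterm_nonneg (Finset.mem_univ _)
    have hp := p_lower (P n) (K n 0) (K n (Fin.last r)) (hKP n (Fin.last r))
    have hminr := min_le_ratio hx0
    have hxx : x / (1 + x) = ((K n 0 : ℝ) * (K n (Fin.last r)) / (P n)) /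
        (1 + (K n 0 : ℝ) * (K n (Fin.last r)) / (P n)) := by rw [hx]
    have hchain : μ (Fin.last r) * (min x 1 / 2) ≤ 2 * (c * Real.log n / n) := by
      have h5 : min x 1 / 2 ≤ 1 - (((P n - K n 0).choose (K n (Fin.last r)) : ℝ)) /
          (((P n).choose (K n (Fin.last r)) : ℝ)) := by
        refine le_trans hminr ?_
        rw [hxx]; exact hp
      have h6 := mul_le_mul_of_nonneg_left h5 hμr.le
      linarith
    have hmin_le : min x 1 ≤ C * (Real.log n / n) := by
      rw [hC, div_mul_eq_mul_div, le_div_iff₀ hμr]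
      calc min x 1 * μ (Fin.last r) = 2 * (μ (Fin.last r) * (min x 1 / 2)) := by ring
        _ ≤ 2 * (2 * (c * Real.log n / n)) := by linarith
        _ = 4 * c * (Real.log n / n) := by ring
    rcases le_total x 1 with h | h
    · rwa [min_eq_left h] at hmin_le
    · rw [min_eq_right h] at hmin_le
      linarith
  -- Goal 1
  have goal1 : Tendsto
      (fun n => ((K n (Fin.last r) : ℝ) / (K n 0 : ℝ)) / Real.log n) atTop (nhds 0) := by
    have hU : Tendsto (fun n : ℕ => C * (((K n 0 : ℝ) ^ 2 / (P n : ℝ)) * n)⁻¹)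
        atTop (nhds 0) := by
      have := (tendsto_inv_atTop_zero.comp homega).const_mul C
      rw [mul_zero] at this
      simpa [Function.comp] using this
    apply tendsto_of_tendsto_of_tendsto_of_le_of_le' tendsto_const_nhds hU
    · filter_upwards [eventually_ge_atTop 1] with n hn1
      have hL : 0 ≤ Real.log n := Real.log_nonneg (by exact_mod_cast hn1)
      positivity
    · filter_upwards [hEx, eventually_ge_atTop 2] with n hxb hn2
      have hn1 : (1 : ℝ) < n := by exact_mod_cast (by omega : 1 < n)
      have hL : 0 < Real.log n := Real.log_pos hn1
      have hN : (0 : ℝ) < n := by linarith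
      have hK1n : (0 : ℝ) < (K n 0 : ℝ) := by exact_mod_cast hK1 n
      have hPn : (0 : ℝ) < (P n : ℝ) := by exact_mod_cast (Nat.zero_le _).trans_lt (hKP n 0)
      have hL' : Real.log n ≠ 0 := hL.ne'
      have hN' : (n : ℝ) ≠ 0 := hN.ne'
      have hK1' : (K n 0 : ℝ) ≠ 0 := hK1n.ne'
      have hP' : (P n : ℝ) ≠ 0 := hPn.ne'
      calc ((K n (Fin.last r) : ℝ) / (K n 0 : ℝ)) / Real.log n
          = ((K n 0 : ℝ) * (K n (Fin.last r)) / (P n)) *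
            ((P n : ℝ) / ((K n 0 : ℝ) ^ 2 * Real.log n)) := by
            field_simp
        _ ≤ (C * (Real.log n / n)) *
            ((P n : ℝ) / ((K n 0 : ℝ) ^ 2 * Real.log n)) :=
            mul_le_mul_of_nonneg_right hxb (by positivity)
        _ = C * (((K n 0 : ℝ) ^ 2 / (P n : ℝ)) * n)⁻¹ := by
            field_simp
  refine ⟨goal1, ?_⟩
  -- Goal 2
  have hU2 : Tendsto (fun n : ℕ =>
      C * (((K n (Fin.last r) : ℝ) / (K n 0 : ℝ)) / Real.log n)) atTop (nhds 0) := by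
    have := goal1.const_mul C
    rwa [mul_zero] at this
  apply tendsto_of_tendsto_of_tendsto_of_le_of_le' tendsto_const_nhds hU2
  · filter_upwards [eventually_ge_atTop 1] with n hn1
    have hL : 0 ≤ Real.log n := Real.log_nonneg (by exact_mod_cast hn1)
    positivity
  · filter_upwards [hEx, eventually_ge_atTop 2] with n hxb hn2
    have hn1 : (1 : ℝ) < n := by exact_mod_cast (by omega : 1 < n)
    have hL : 0 < Real.log n := Real.log_pos hn1
    have hN : (0 : ℝ) < n := by linarith
    have hK1n : (0 : ℝ) < (K n 0 : ℝ) := by exact_mod_cast hK1 n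
    have hKr0 : (0 : ℝ) ≤ (K n (Fin.last r) : ℝ) := by positivity
    have hPn : (0 : ℝ) < (P n : ℝ) := by exact_mod_cast (Nat.zero_le _).trans_lt (hKP n 0)
    have hL' : Real.log n ≠ 0 := hL.ne'
    have hN' : (n : ℝ) ≠ 0 := hN.ne'
    have hK1' : (K n 0 : ℝ) ≠ 0 := hK1n.ne'
    have hP' : (P n : ℝ) ≠ 0 := hPn.ne'
    calc ((K n (Fin.last r) : ℝ) ^ 2 / (P n : ℝ)) / ((Real.log n) ^ 2 / n)
        = ((K n 0 : ℝ) * (K n (Fin.last r)) / (P n)) *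
          ((K n (Fin.last r) : ℝ) * n / ((K n 0 : ℝ) * (Real.log n) ^ 2)) := by
          field_simp
      _ ≤ (C * (Real.log n / n)) *
          ((K n (Fin.last r) : ℝ) * n / ((K n 0 : ℝ) * (Real.log n) ^ 2)) :=
          mul_le_mul_of_nonneg_right hxb (by positivity)
      _ = C * (((K n (Fin.last r) : ℝ) / (K n 0 : ℝ)) / Real.log n) := by
          field_simp
end

section
/- In a random key graph where every node has exactly K keys drawn uniformly from a P-pool, edge events are pairwise independent along any tree: for any tree T on ℓ labeled vertices, the probability that all ℓ-1 edges of T are present equals p^{ℓ-1}, where p = 1 - C(P-K,K)/C(P,K). -/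
open Finset

section aux
open SimpleGraph

-- sum of weights = 1
lemma sumw (P K : ℕ) (hKP : K ≤ P) :
    (∑ s : Finset (Fin P), (if s.card = K then 1 / ((P.choose K : ℝ)) else 0)) = 1 := by
  rw [← Finset.sum_filter, Finset.sum_const]
  have : (Finset.univ.filter fun s : Finset (Fin P) => s.card = K) =
      Finset.powersetCard K Finset.univ := by
    ext s; simp [Finset.mem_powersetCard]
  rw [this, Finset.card_powersetCard, Finset.card_univ, Fintype.card_fin]
  have hC : (P.choose K : ℝ) ≠ 0 := by
    exact_mod_cast (Nat.choose_pos hKP).ne'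
  rw [nsmul_eq_mul]
  field_simp

-- key single-vertex sum
lemma keySum (P K : ℕ) (hKP : K ≤ P) (S : Finset (Fin P)) (hS : S.card = K) :
    (∑ s : Finset (Fin P), (if s.card = K then 1 / ((P.choose K : ℝ)) else 0) *
      (if s ∩ S ≠ ∅ then 1 else 0)) =
      1 - (((P - K).choose K : ℝ)) / ((P.choose K : ℝ)) := by
  have hC : (P.choose K : ℝ) ≠ 0 := by exact_mod_cast (Nat.choose_pos hKP).ne'
  have h1 : ∀ s : Finset (Fin P),
      (if s.card = K then 1 / ((P.choose K : ℝ)) else 0) * (if s ∩ S ≠ ∅ then 1 else 0) =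
      (if s.card = K then 1 / ((P.choose K : ℝ)) else 0) -
      (if s.card = K ∧ s ∩ S = ∅ then 1 / ((P.choose K : ℝ)) else 0) := by
    intro s; split_ifs <;> simp_all
  rw [Finset.sum_congr rfl fun s _ => h1 s, Finset.sum_sub_distrib, sumw P K hKP]
  congr 1
  rw [← Finset.sum_filter, Finset.sum_const]
  have : (Finset.univ.filter fun s : Finset (Fin P) => s.card = K ∧ s ∩ S = ∅) =
      Finset.powersetCard K Sᶜ := by
    ext s
    simp only [Finset.mem_filter, Finset.mem_univ, true_and, Finset.mem_powersetCard]
    constructor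
    · rintro ⟨h1, h2⟩
      exact ⟨Finset.subset_compl_comm.mpr (by
        intro x hx
        simp only [Finset.mem_compl]
        intro hxs
        exact Finset.notMem_empty x (h2 ▸ Finset.mem_inter.mpr ⟨hxs, hx⟩)), h1⟩
    · rintro ⟨h1, h2⟩
      refine ⟨h2, Finset.eq_empty_of_forall_notMem fun x hx => ?_⟩
      obtain ⟨hx1, hx2⟩ := Finset.mem_inter.mp hx
      exact Finset.mem_compl.mp (h1 hx1) hx2
  rw [this, Finset.card_powersetCard, Finset.card_compl, Fintype.card_fin, hS]
  rw [nsmul_eq_mul]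
  field_simp

lemma exists_leaf {V : Type} [Fintype V] [DecidableEq V] (T : SimpleGraph V)
    [DecidableRel T.Adj] (hT : T.IsTree) (h2 : 2 ≤ Fintype.card V) :
    ∃ v u : V, T.Adj v u ∧ ∀ w, T.Adj v w → w = u := by
  have hdeg : ∀ v : V, 1 ≤ T.degree v := by
    intro v
    obtain ⟨w, hw⟩ := Fintype.exists_ne_of_one_lt_card (by omega) v
    obtain ⟨p⟩ := hT.isConnected.preconnected v w
    have hnil : ¬ p.Nil := Walk.not_nil_of_ne (Ne.symm hw)
    exact (T.degree_pos_iff_exists_adj v).mpr ⟨_, Walk.adj_snd hnil⟩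
  have hone : ∃ v : V, T.degree v = 1 := by
    by_contra h
    push_neg at h
    have h2d : ∀ v : V, 2 ≤ T.degree v := fun v => by
      have := hdeg v; have := h v; omega
    have hsum : 2 * Fintype.card V ≤ ∑ v : V, T.degree v := by
      calc 2 * Fintype.card V = ∑ _v : V, 2 := by
            rw [Finset.sum_const, Finset.card_univ]; ring
        _ ≤ ∑ v : V, T.degree v := Finset.sum_le_sum fun v _ => h2d v
    rw [T.sum_degrees_eq_twice_card_edges] at hsum
    have := hT.card_edgeFinset
    omega
  obtain ⟨v, hv⟩ := hone
  rw [← T.card_neighborFinset_eq_degree, Finset.card_eq_one] at hv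
  obtain ⟨u, hu⟩ := hv
  refine ⟨v, u, ?_, fun w hw => ?_⟩
  · have : u ∈ T.neighborFinset v := hu ▸ Finset.mem_singleton_self u
    exact (T.mem_neighborFinset v u).mp this
  · have : w ∈ T.neighborFinset v := (T.mem_neighborFinset v w).mpr hw
    rw [hu, Finset.mem_singleton] at this; exact this

lemma lift_walk {V : Type} [DecidableEq V] (T : SimpleGraph V) (v : V) :
    ∀ {x y : V} (p : T.Walk x y), v ∉ p.support → ∀ (hx : x ≠ v) (hy : y ≠ v),
      (T.comap (Subtype.val : {a : V // a ≠ v} → V)).Reachable ⟨x, hx⟩ ⟨y, hy⟩ := by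
  intro x y p
  induction p with
  | nil => intro _ hx hy; rfl
  | @cons a b c h q ih =>
    intro hp ha hc
    rw [Walk.support_cons] at hp
    have hq : v ∉ q.support := fun h' => hp (List.mem_cons_of_mem _ h')
    have hb : b ≠ v := fun h' => hp (h' ▸ List.mem_cons_of_mem _ q.start_mem_support)
    exact Reachable.trans (Adj.reachable (by exact h)) (ih hq hb hc)

lemma tree_del {V : Type} [Fintype V] [DecidableEq V] (T : SimpleGraph V)
    [DecidableRel T.Adj] (hT : T.IsTree) (v u : V) (hadj : T.Adj v u)
    (huniq : ∀ w, T.Adj v w → w = u) :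
    (T.comap (Subtype.val : {a : V // a ≠ v} → V)).IsTree := by
  have hvsupp : ∀ {x y : V} (p : T.Walk x y), p.IsPath → x ≠ v → y ≠ v → v ∉ p.support := by
    intro x y p hpath hx hy hv
    set q := p.takeUntil v hv with hqdef
    set r := p.dropUntil v hv with hrdef
    have hq : ¬ q.Nil := Walk.not_nil_of_ne hx
    have hr : ¬ r.Nil := Walk.not_nil_of_ne (Ne.symm hy)
    have hqr : ¬ q.reverse.Nil := Walk.not_nil_of_ne (Ne.symm hx)
    -- a := q.reverse.getVert 1 adjacent to v, in q.support
    have ha : T.Adj v (q.reverse.getVert 1) := Walk.adj_snd hqr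
    have hamem : q.reverse.getVert 1 ∈ q.support := by
      have h1 : q.reverse.getVert 1 ∈ q.reverse.support := by
        rw [Walk.mem_support_iff_exists_getVert]
        exact ⟨1, rfl, by rw [Walk.not_nil_iff_lt_length] at hqr; omega⟩
      rwa [Walk.support_reverse, List.mem_reverse] at h1
    -- b := r.getVert 1 adjacent to v, in r.support.tail
    have hb : T.Adj v (r.getVert 1) := Walk.adj_snd hr
    have hbmem : r.getVert 1 ∈ r.support.tail := by
      have h1 : r.getVert 1 ∈ r.tail.support := by
        have := r.tail.start_mem_support
        exact this
      rwa [Walk.support_tail_of_not_nil r hr] at h1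
    have hau : q.reverse.getVert 1 = u := huniq _ ha
    have hbu : r.getVert 1 = u := huniq _ hb
    have hnodup : (q.support ++ r.support.tail).Nodup := by
      have := hpath.support_nodup
      rwa [← p.take_spec hv, Walk.support_append] at this
    exact (List.disjoint_of_nodup_append hnodup) (hau ▸ hamem) (hbu ▸ hbmem)
  have hne : Nonempty {a : V // a ≠ v} := ⟨⟨u, (T.ne_of_adj hadj).symm⟩⟩
  constructor
  · exact Connected.mk (by
      rintro ⟨x, hx⟩ ⟨y, hy⟩
      obtain ⟨p, hp, -⟩ := hT.existsUnique_path x y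
      exact lift_walk T v p (hvsupp p hp hx hy) hx hy)
  · intro x c hc
    have := hc.map (f := (SimpleGraph.Embedding.comap
      (Function.Embedding.subtype fun a => a ≠ v) T).toHom) Subtype.val_injective
    exact hT.IsAcyclic _ this
lemma main_lemma (P K : ℕ) (hK : 0 < K) (hKP : K ≤ P) :
    ∀ (n : ℕ) (V : Type) [Fintype V] [DecidableEq V] (T : SimpleGraph V)
      [DecidableRel T.Adj], T.IsTree → Fintype.card V = n →
      (∑ σ : V → Finset (Fin P),
        (∏ a, if (σ a).card = K then 1 / ((P.choose K : ℝ)) else 0) *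
          (if ∀ a b : V, T.Adj a b → σ a ∩ σ b ≠ ∅ then 1 else 0)) =
      (1 - (((P - K).choose K : ℝ)) / ((P.choose K : ℝ))) ^ (n - 1) := by
  intro n
  induction n using Nat.strong_induction_on with
  | _ n IH =>
    intro V _ _ T _ hT hcard
    have hne : Nonempty V := hT.isConnected.nonempty
    have hn1 : 1 ≤ n := hcard ▸ Fintype.card_pos
    rcases Nat.lt_or_ge n 2 with hn | hn
    · -- n = 1
      have hn' : n = 1 := by omega
      subst hn'
      obtain ⟨x, hx⟩ := Fintype.card_eq_one_iff.mp hcard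
      letI : Unique V := ⟨⟨x⟩, hx⟩
      have hadj : ∀ a b : V, ¬ T.Adj a b := by
        intro a b hab
        exact (T.ne_of_adj hab) ((hx a).trans (hx b).symm)
      have h1 : ∀ σ : V → Finset (Fin P),
          (if ∀ a b : V, T.Adj a b → σ a ∩ σ b ≠ ∅ then (1:ℝ) else 0) = 1 := by
        intro σ; rw [if_pos]; intro a b hab; exact absurd hab (hadj a b)
      simp only [h1, mul_one, pow_zero]
      rw [← Equiv.sum_comp (Equiv.funUnique V (Finset (Fin P))).symm]
      have h2 : ∀ s : Finset (Fin P),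
          (∏ a : V, if (((Equiv.funUnique V (Finset (Fin P))).symm s) a).card = K
            then 1 / ((P.choose K : ℝ)) else 0) =
          (if s.card = K then 1 / ((P.choose K : ℝ)) else 0) := by
        intro s
        rw [Fintype.prod_unique]
        rfl
      rw [Finset.sum_congr rfl fun s _ => h2 s]
      exact sumw P K hKP
    · -- n ≥ 2 : leaf removal
      obtain ⟨v, u, hadj, huniq⟩ := exists_leaf T hT (hcard ▸ hn)
      have huv : u ≠ v := fun h => T.ne_of_adj hadj h.symm
      set V' := {a : V // a ≠ v} with hV'
      set T' := T.comap (Subtype.val : V' → V) with hT'def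
      letI : DecidableRel T'.Adj := fun a b => (inferInstance : Decidable (T.Adj a.val b.val))
      have hT' : T'.IsTree := tree_del T hT v u hadj huniq
      have hcard' : Fintype.card V' = n - 1 := by
        have : Fintype.card V' = Fintype.card V - Fintype.card {a : V // a = v} :=
          Fintype.card_subtype_compl _
        rw [this, Fintype.card_subtype_eq, hcard]
      have hIH := IH (n - 1) (by omega) V' T' hT' hcard'
      set p : ℝ := 1 - (((P - K).choose K : ℝ)) / ((P.choose K : ℝ)) with hp
      -- reindex the sum
      rw [← Equiv.sum_comp (Equiv.funSplitAt v (Finset (Fin P))).symm, Fintype.sum_prod_type,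
        Finset.sum_comm]
      -- now goal : ∑ σ' ∑ s, F ((funSplitAt v _).symm (s, σ')) = p ^ (n-1)
      have hterm : ∀ (σ' : V' → Finset (Fin P)) (s : Finset (Fin P)),
          ((∏ a : V, if ((((Equiv.funSplitAt v (Finset (Fin P))).symm (s, σ')) a).card = K)
              then 1 / ((P.choose K : ℝ)) else 0) *
            (if ∀ a b : V, T.Adj a b →
                ((Equiv.funSplitAt v (Finset (Fin P))).symm (s, σ')) a ∩
                ((Equiv.funSplitAt v (Finset (Fin P))).symm (s, σ')) b ≠ ∅ then 1 else 0)) =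
          ((if s.card = K then 1 / ((P.choose K : ℝ)) else 0) *
              (if s ∩ σ' ⟨u, huv⟩ ≠ ∅ then 1 else 0)) *
            ((∏ a : V', if (σ' a).card = K then 1 / ((P.choose K : ℝ)) else 0) *
              (if ∀ a b : V', T'.Adj a b → σ' a ∩ σ' b ≠ ∅ then 1 else 0)) := by
        intro σ' s
        set σ : V → Finset (Fin P) := (Equiv.funSplitAt v (Finset (Fin P))).symm (s, σ') with hσ
        have hσv : σ v = s := by
          simp [hσ, Equiv.funSplitAt, Equiv.piSplitAt]
        have hσa : ∀ a : V', σ a.val = σ' a := by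
          intro a
          simp [hσ, Equiv.funSplitAt, Equiv.piSplitAt, a.2]
        -- product splits
        have hprod : (∏ a : V, if ((σ a).card = K) then 1 / ((P.choose K : ℝ)) else 0) =
            (if s.card = K then 1 / ((P.choose K : ℝ)) else 0) *
            (∏ a : V', if (σ' a).card = K then 1 / ((P.choose K : ℝ)) else 0) := by
          rw [← Finset.mul_prod_erase Finset.univ _ (Finset.mem_univ v), hσv]
          congr 1
          rw [Finset.prod_subtype (p := fun x => x ≠ v) (Finset.univ.erase v)
            (fun x => by simp [Finset.mem_erase]) (fun a => if (σ a).card = K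
              then 1 / ((P.choose K : ℝ)) else 0)]
          exact Finset.prod_congr rfl fun a _ => by rw [hσa]
        -- indicator splits
        have hiff : (∀ a b : V, T.Adj a b → σ a ∩ σ b ≠ ∅) ↔
            ((s ∩ σ' ⟨u, huv⟩ ≠ ∅) ∧ ∀ a b : V', T'.Adj a b → σ' a ∩ σ' b ≠ ∅) := by
          constructor
          · intro h
            refine ⟨?_, ?_⟩
            · have := h v u hadj
              rwa [hσv, hσa ⟨u, huv⟩] at this
            · intro a b hab
              have := h a.val b.val hab
              rwa [hσa, hσa] at this
          · rintro ⟨h2, h1⟩ a b hab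
            by_cases ha : a = v
            · subst ha
              have hb : b = u := huniq b hab
              subst hb
              rwa [hσv, hσa ⟨b, huv⟩]
            · by_cases hb : b = v
              · subst hb
                have ha' : a = u := huniq a hab.symm
                subst ha'
                rw [hσa ⟨a, huv⟩, hσv, Finset.inter_comm]
                exact h2
              · have := h1 ⟨a, ha⟩ ⟨b, hb⟩ hab
                rw [← hσa ⟨a, ha⟩, ← hσa ⟨b, hb⟩] at this
                exact this
        have hind : (if ∀ a b : V, T.Adj a b → σ a ∩ σ b ≠ ∅ then (1:ℝ) else 0) =
            (if s ∩ σ' ⟨u, huv⟩ ≠ ∅ then (1:ℝ) else 0) *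
            (if ∀ a b : V', T'.Adj a b → σ' a ∩ σ' b ≠ ∅ then (1:ℝ) else 0) := by
          rw [if_congr hiff rfl rfl]
          by_cases hA : s ∩ σ' ⟨u, huv⟩ ≠ ∅ <;>
            by_cases hB : ∀ a b : V', T'.Adj a b → σ' a ∩ σ' b ≠ ∅ <;>
            simp [hA, hB]
        rw [hprod, hind]
        ring
      rw [Finset.sum_congr rfl fun σ' _ => Finset.sum_congr rfl fun s _ => hterm σ' s]
      -- inner sum evaluates to p * (weight' * ind')
      have hinner : ∀ σ' : V' → Finset (Fin P),
          (∑ s : Finset (Fin P),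
            ((if s.card = K then 1 / ((P.choose K : ℝ)) else 0) *
              (if s ∩ σ' ⟨u, huv⟩ ≠ ∅ then 1 else 0)) *
            ((∏ a : V', if (σ' a).card = K then 1 / ((P.choose K : ℝ)) else 0) *
              (if ∀ a b : V', T'.Adj a b → σ' a ∩ σ' b ≠ ∅ then 1 else 0))) =
          p * ((∏ a : V', if (σ' a).card = K then 1 / ((P.choose K : ℝ)) else 0) *
              (if ∀ a b : V', T'.Adj a b → σ' a ∩ σ' b ≠ ∅ then 1 else 0)) := by
        intro σ'
        rw [← Finset.sum_mul]
        by_cases hScard : (σ' ⟨u, huv⟩).card = K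
        · rw [keySum P K hKP _ hScard]
        · have hz : (∏ a : V', if (σ' a).card = K then 1 / ((P.choose K : ℝ)) else 0) = 0 :=
            Finset.prod_eq_zero (Finset.mem_univ ⟨u, huv⟩) (if_neg hScard)
          rw [hz]; ring
      rw [Finset.sum_congr rfl fun σ' _ => hinner σ', ← Finset.mul_sum, hIH]
      conv_rhs => rw [show n - 1 = (n - 1 - 1) + 1 from by omega]
      rw [pow_succ]
      ring

end aux

theorem stmt16 (l P K : ℕ) (hK : 0 < K) (hKP : K ≤ P) (hl : 1 ≤ l)
    (T : SimpleGraph (Fin l)) [DecidableRel T.Adj] (hT : T.IsTree) :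
    (∑ σ : Fin l → Finset (Fin P),
        (∏ a, if (σ a).card = K then 1 / ((P.choose K : ℝ)) else 0) *
          (if ∀ a b : Fin l, T.Adj a b → σ a ∩ σ b ≠ ∅ then 1 else 0)) =
      (1 - (((P - K).choose K : ℝ)) / ((P.choose K : ℝ))) ^ (l - 1) := by
  have h := main_lemma P K hK hKP l (Fin l) T hT (Fintype.card_fin l)
  convert h using 3
  congr
end

section
/- In the inhomogeneous random key graph restricted to ℓ nodes with key ring sizes at most K_r, the probability that the induced subgraph on these ℓ nodes is connected is at most ℓ^{ℓ-2} (p_{rr})^{ℓ-1}, where p_{rr} = 1 - C(P-K_r, K_r)/C(P, K_r). -/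
open Finset
open scoped Classical

namespace Stmt17

variable {V : Type*}

/-! ### Decoder and good lists -/

noncomputable def minOf [LinearOrder V] (d : V) (s : Finset V) : V :=
  if h : s.Nonempty then s.min' h else d

noncomputable def decodeAux [LinearOrder V] (d : V) : Finset V → List V → List (V × V)
  | _, [] => []
  | A, u :: us =>
    (minOf d (A \ (u :: us).toFinset), u) ::
      decodeAux d (A.erase (minOf d (A \ (u :: us).toFinset))) us

def GoodL : List (V × V) → Prop
  | [] => True
  | e :: L => e.1 ≠ e.2 ∧ (∀ e' ∈ L, e'.1 ≠ e.1 ∧ e'.2 ≠ e.1) ∧ GoodL L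

lemma decode_spec [LinearOrder V] (d : V) :
    ∀ (us : List V) (A : Finset V), us.length < A.card →
      (decodeAux d A us).length = us.length ∧ GoodL (decodeAux d A us) ∧
        ∀ e ∈ decodeAux d A us, e.1 ∈ A ∧ e.2 ∈ us := by
  intro us
  induction us with
  | nil =>
    intro A _
    exact ⟨rfl, trivial, by simp [decodeAux]⟩
  | cons u us ih =>
    intro A h
    have hne : (A \ (u :: us).toFinset).Nonempty := by
      rw [Finset.sdiff_nonempty]
      intro hsub
      have h1 := Finset.card_le_card hsub
      have h2 := List.toFinset_card_le (l := (u :: us))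
      have h3 : (u :: us).length = us.length + 1 := rfl
      simp only [List.length_cons] at h
      omega
    have hv : minOf d (A \ (u :: us).toFinset) ∈ A \ (u :: us).toFinset := by
      rw [minOf, dif_pos hne]; exact Finset.min'_mem _ _
    set v := minOf d (A \ (u :: us).toFinset) with hvdef
    have hvA : v ∈ A := (Finset.mem_sdiff.1 hv).1
    have hvt : v ∉ (u :: us : List V) := by
      have := (Finset.mem_sdiff.1 hv).2
      simpa using this
    have hcard : us.length < (A.erase v).card := by
      rw [Finset.card_erase_of_mem hvA]
      simp only [List.length_cons] at h
      omega
    obtain ⟨hlen, hgood, hmem⟩ := ih (A.erase v) hcard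
    have hd : decodeAux d A (u :: us) = (v, u) :: decodeAux d (A.erase v) us := by
      simp only [decodeAux]
      rfl
    rw [hd]
    have hgood2 : GoodL ((v, u) :: decodeAux d (A.erase v) us) := by
      show v ≠ u ∧ (∀ e' ∈ decodeAux d (A.erase v) us, e'.1 ≠ v ∧ e'.2 ≠ v) ∧
        GoodL (decodeAux d (A.erase v) us)
      refine ⟨?_, ?_, hgood⟩
      · intro hveq
        exact hvt (by rw [hveq]; exact List.mem_cons_self)
      · intro e' he'
        obtain ⟨h1, h2⟩ := hmem e' he'
        constructor
        · exact (Finset.mem_erase.1 h1).1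
        · intro hE
          exact hvt (by rw [← hE]; exact List.mem_cons_of_mem u h2)
    refine ⟨by simp [hlen], hgood2, ?_⟩
    · intro e he
      rcases List.mem_cons.1 he with h' | h'
      · subst h'; exact ⟨hvA, List.mem_cons_self⟩
      · obtain ⟨h1, h2⟩ := hmem e h'
        exact ⟨Finset.mem_of_mem_erase h1, List.mem_cons_of_mem u h2⟩

/-! ### Connectivity on finsets -/

def Conn (R : V → V → Prop) (A : Finset V) : Prop :=
  ∀ x ∈ A, ∀ y ∈ A, Relation.ReflTransGen (fun a b => R a b ∧ a ∈ A ∧ b ∈ A) x y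

lemma exists_noncut [Fintype V] [DecidableEq V] {R : V → V → Prop} (hsym : Symmetric R)
    {A : Finset V} (h2 : 2 ≤ A.card) (hc : Conn R A) {z : V} (hz : z ∈ A) :
    ∃ y ∈ A, y ≠ z ∧ Conn R (A.erase y) := by
  set D : ℕ → Finset V :=
    fun n => Nat.rec {z} (fun _ Dn => Dn ∪ A.filter fun x => ∃ w ∈ Dn, R w x) n with hDdef
  have hD0 : D 0 = {z} := rfl
  have hDs : ∀ n, D (n+1) = D n ∪ A.filter fun x => ∃ w ∈ D n, R w x := fun n => rfl
  have hDA : ∀ n, D n ⊆ A := by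
    intro n; induction n with
    | zero => rw [hD0]; intro x hx; rw [Finset.mem_singleton] at hx; rwa [hx]
    | succ n ihn => rw [hDs]; exact Finset.union_subset ihn (Finset.filter_subset _ _)
  have hreach : ∀ x ∈ A, ∃ n, x ∈ D n := by
    intro x hx
    have h := hc z hz x hx
    clear hx
    induction h with
    | refl => exact ⟨0, by rw [hD0]; exact Finset.mem_singleton_self z⟩
    | tail hab hbc ih =>
        obtain ⟨n, hn⟩ := ih
        exact ⟨n+1, by
          rw [hDs]
          exact Finset.mem_union_right _ (Finset.mem_filter.2 ⟨hbc.2.2, ⟨_, hn, hbc.1⟩⟩)⟩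
  set f : V → ℕ := fun x => if hx : x ∈ A then Nat.find (hreach x hx) else 0 with hfdef
  obtain ⟨y, hyA, hymax⟩ := Finset.exists_max_image A f ⟨z, hz⟩
  have hfz : f z = 0 := by
    rw [hfdef]; simp only [dif_pos hz]
    rw [Nat.find_eq_zero]
    rw [hD0]; exact Finset.mem_singleton_self z
  have hD0mem : ∀ x ∈ A, f x = 0 → x = z := by
    intro x hx hfx
    rw [hfdef] at hfx; simp only [dif_pos hx] at hfx
    have : x ∈ D 0 := by
      have := Nat.find_spec (hreach x hx); rwa [hfx] at this
    rw [hD0] at this; exact Finset.mem_singleton.1 this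
  have hyz : y ≠ z := by
    rintro rfl
    have hsub : A ⊆ {y} := by
      intro x hx
      have hfx : f x = 0 := by
        have := hymax x hx
        omega
      rw [Finset.mem_singleton]
      exact (hD0mem x hx hfx).trans (hD0mem y hyA hfz).symm
    have := Finset.card_le_card hsub
    simp at this; omega
  have hDfind : ∀ x (hx : x ∈ A), x ∈ D (f x) := by
    intro x hx; rw [hfdef]; simp only [dif_pos hx]; exact Nat.find_spec (hreach x hx)
  have key : ∀ n x, x ∈ A → x ≠ y → f x = n →
      Relation.ReflTransGen (fun a b => R a b ∧ a ∈ A.erase y ∧ b ∈ A.erase y) z x := by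
    intro n
    induction n using Nat.strong_induction_on with
    | _ n ihn =>
      intro x hx hxy hfx
      rcases Nat.eq_zero_or_pos n with h0 | hpos
      · subst h0
        have : x = z := hD0mem x hx hfx
        subst this; exact Relation.ReflTransGen.refl
      · obtain ⟨m, rfl⟩ : ∃ m, n = m + 1 := ⟨n-1, by omega⟩
        have hx1 : x ∈ D (m+1) := by have := hDfind x hx; rwa [hfx] at this
        have hx0 : x ∉ D m := by
          intro hmem
          have : f x ≤ m := by
            rw [hfdef]; simp only [dif_pos hx]; exact Nat.find_le hmem
          omega
        rw [hDs] at hx1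
        rcases Finset.mem_union.1 hx1 with h | h
        · exact absurd h hx0
        · obtain ⟨hxA, w, hwD, hRwx⟩ := Finset.mem_filter.1 h
          have hwA : w ∈ A := hDA m hwD
          have hfw : f w ≤ m := by
            rw [hfdef]; simp only [dif_pos hwA]; exact Nat.find_le hwD
          have hwy : w ≠ y := by
            intro h'; subst h'
            have := hymax x hx
            omega
          have hchain := ihn (f w) (by omega) w hwA hwy rfl
          exact hchain.tail ⟨hRwx, Finset.mem_erase.2 ⟨hwy, hwA⟩, Finset.mem_erase.2 ⟨hxy, hxA⟩⟩
  refine ⟨y, hyA, hyz, ?_⟩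
  intro a ha b hb
  have hsym' : Symmetric (fun a b => R a b ∧ a ∈ A.erase y ∧ b ∈ A.erase y) :=
    fun a b h => ⟨hsym h.1, h.2.2, h.2.1⟩
  have hza := key (f a) a (Finset.mem_erase.1 ha).2 (Finset.mem_erase.1 ha).1 rfl
  have hzb := key (f b) b (Finset.mem_erase.1 hb).2 (Finset.mem_erase.1 hb).1 rfl
  exact ((@Relation.ReflTransGen.stdSymm _ _ ⟨fun a b h => hsym' h⟩).symm _ _ hza).trans hzb

lemma healing [DecidableEq V] {R : V → V → Prop} (hsym : Symmetric R) {A : Finset V} {v x w : V}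
    (hv : v ∈ A) (hx : x ∈ A) (hxv : x ≠ v)
    (hxcut : ¬ Conn R (A.erase x)) (hheal : Conn R ((A.erase v).erase x))
    (hw : w ∈ A) (hwv : w ≠ v) (hwx : w ≠ x) (hRvw : R v w) : False := by
  apply hxcut
  have hvAx : v ∈ A.erase x := Finset.mem_erase.2 ⟨Ne.symm hxv, hv⟩
  have hwAx : w ∈ A.erase x := Finset.mem_erase.2 ⟨hwx, hw⟩
  have lift : ∀ {a b : V},
      Relation.ReflTransGen
        (fun a b => R a b ∧ a ∈ (A.erase v).erase x ∧ b ∈ (A.erase v).erase x) a b →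
      Relation.ReflTransGen (fun a b => R a b ∧ a ∈ A.erase x ∧ b ∈ A.erase x) a b := by
    intro a b h
    refine Relation.ReflTransGen.mono ?_ _ _ h
    rintro a b ⟨h1, h2, h3⟩
    refine ⟨h1, ?_, ?_⟩
    · obtain ⟨ha1, ha2⟩ := Finset.mem_erase.1 h2
      exact Finset.mem_erase.2 ⟨ha1, (Finset.mem_erase.1 ha2).2⟩
    · obtain ⟨hb1, hb2⟩ := Finset.mem_erase.1 h3
      exact Finset.mem_erase.2 ⟨hb1, (Finset.mem_erase.1 hb2).2⟩
  have keyc : ∀ c ∈ A.erase x,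
      Relation.ReflTransGen (fun a b => R a b ∧ a ∈ A.erase x ∧ b ∈ A.erase x) v c := by
    intro c hc
    by_cases hcv : c = v
    · subst hcv; exact Relation.ReflTransGen.refl
    · have hc' : c ∈ (A.erase v).erase x :=
        Finset.mem_erase.2 ⟨(Finset.mem_erase.1 hc).1,
          Finset.mem_erase.2 ⟨hcv, (Finset.mem_erase.1 hc).2⟩⟩
      have hw' : w ∈ (A.erase v).erase x :=
        Finset.mem_erase.2 ⟨hwx, Finset.mem_erase.2 ⟨hwv, hw⟩⟩
      exact Relation.ReflTransGen.head ⟨hRvw, hvAx, hwAx⟩ (lift (hheal w hw' c hc'))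
  intro a ha b hb
  have hsym' : Symmetric (fun a b => R a b ∧ a ∈ A.erase x ∧ b ∈ A.erase x) :=
    fun a b h => ⟨hsym h.1, h.2.2, h.2.1⟩
  exact ((@Relation.ReflTransGen.stdSymm _ _ ⟨fun a b h => hsym' h⟩).symm _ _ (keyc a ha)).trans (keyc b hb)

/-- Main combinatorial theorem. -/
lemma mct [Fintype V] [LinearOrder V] {R : V → V → Prop} (hsym : Symmetric R)
    (hirr : ∀ x, ¬ R x x) (d : V) :
    ∀ (n : ℕ) (A : Finset V), A.card ≤ n → ∀ (hA : A.Nonempty), Conn R A →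
      ∃ us : List V, us.length = A.card - 1 ∧ (∀ x ∈ us, x ∈ A) ∧
        (∀ h : us ≠ [], us.getLast h = A.max' hA) ∧
        (∀ x ∈ A, ¬ Conn R (A.erase x) → x ∈ us) ∧
        (∀ e ∈ decodeAux d A us, R e.1 e.2) := by
  intro n
  induction n with
  | zero =>
    intro A hle hA
    have := Finset.card_pos.2 hA
    omega
  | succ n ih =>
    intro A hle hA hc
    by_cases hcard : A.card ≤ 1
    · have h1 : A.card = 1 := le_antisymm hcard (Finset.card_pos.2 hA)
      obtain ⟨a, rfl⟩ := Finset.card_eq_one.1 h1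
      refine ⟨[], by simp, by simp, by simp, ?_, by simp [decodeAux]⟩
      intro x hx hcut
      exfalso; apply hcut
      have hxa : x = a := Finset.mem_singleton.1 hx
      have hE : ({a} : Finset V).erase x = ∅ := by rw [hxa]; simp
      rw [hE]
      intro p hp
      simp at hp
    · push_neg at hcard
      set z := A.max' hA with hzdef
      have hzA : z ∈ A := A.max'_mem hA
      obtain ⟨y0, hy0A, hy0z, hy0c⟩ := exists_noncut hsym (by omega) hc hzA
      set S := A.filter (fun y => y ≠ z ∧ Conn R (A.erase y)) with hSdef
      have hSne : S.Nonempty := ⟨y0, Finset.mem_filter.2 ⟨hy0A, hy0z, hy0c⟩⟩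
      set v := S.min' hSne with hvdef
      obtain ⟨hvA, hvz, hvc⟩ : v ∈ A ∧ (v ≠ z ∧ Conn R (A.erase v)) :=
        Finset.mem_filter.1 (S.min'_mem hSne)
      have hA'ne : (A.erase v).Nonempty := by
        rw [← Finset.card_pos, Finset.card_erase_of_mem hvA]; omega
      obtain ⟨t, ht⟩ := hA'ne
      have htA : t ∈ A := (Finset.mem_erase.1 ht).2
      have htv : t ≠ v := (Finset.mem_erase.1 ht).1
      obtain ⟨u, hRvu, huA⟩ : ∃ u, R v u ∧ u ∈ A := by
        have hchain := hc v hvA t htA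
        rcases hchain.cases_head with h | ⟨c, ⟨h1, _, h3⟩, _⟩
        · exact absurd h.symm htv
        · exact ⟨c, h1, h3⟩
      have huv : u ≠ v := fun h => hirr v (h ▸ hRvu)
      have huA' : u ∈ A.erase v := Finset.mem_erase.2 ⟨huv, huA⟩
      have hA'ne : (A.erase v).Nonempty := ⟨u, huA'⟩
      have hcard' : (A.erase v).card = A.card - 1 := Finset.card_erase_of_mem hvA
      obtain ⟨us', hlen', hmem', hlast', hcut', hdec'⟩ :=
        ih (A.erase v) (by omega) hA'ne hvc
      have hzA' : z ∈ A.erase v := Finset.mem_erase.2 ⟨Ne.symm hvz, hzA⟩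
      have hmax' : (A.erase v).max' hA'ne = z := by
        apply le_antisymm
        · apply Finset.max'_le
          intro w hw
          exact A.le_max' w (Finset.mem_of_mem_erase hw)
        · exact Finset.le_max' _ z hzA'
      have hcutmem : ∀ x ∈ A, ¬ Conn R (A.erase x) → x ∈ (u :: us' : List V) := by
        intro x hxA hxcut
        have hxv : x ≠ v := by rintro rfl; exact hxcut hvc
        have hxA' : x ∈ A.erase v := Finset.mem_erase.2 ⟨hxv, hxA⟩
        by_cases hxc' : Conn R ((A.erase v).erase x)
        · have hux : u = x := by
            by_contra hux
            exact healing hsym hvA hxA hxv hxcut hxc' huA huv hux hRvu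
          rw [← hux]; exact List.mem_cons_self
        · exact List.mem_cons_of_mem _ (hcut' x hxA' hxc')
      have hvnotin : v ∉ (u :: us' : List V) := by
        intro hmem
        rcases List.mem_cons.1 hmem with h | h
        · exact huv h.symm
        · exact (Finset.mem_erase.1 (hmem' v h)).1 rfl
      have hvsd : v ∈ A \ (u :: us').toFinset := by
        rw [Finset.mem_sdiff]
        exact ⟨hvA, by simpa using hvnotin⟩
      have hvlez : v ≤ z := A.le_max' v hvA
      have hminv : minOf d (A \ (u :: us').toFinset) = v := by
        rw [minOf, dif_pos ⟨v, hvsd⟩]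
        apply le_antisymm (Finset.min'_le _ _ hvsd)
        apply Finset.le_min'
        intro x hxsd
        obtain ⟨hxA, hxnot⟩ := Finset.mem_sdiff.1 hxsd
        by_contra hlt
        push_neg at hlt
        have hxz : x ≠ z := ne_of_lt (lt_of_lt_of_le hlt hvlez)
        by_cases hxc : Conn R (A.erase x)
        · have hxS : x ∈ S := Finset.mem_filter.2 ⟨hxA, hxz, hxc⟩
          exact absurd (Finset.min'_le S x hxS) (not_le.2 hlt)
        · have := hcutmem x hxA hxc
          exact hxnot (by simpa using this)
      have hd : decodeAux d A (u :: us') = (v, u) :: decodeAux d (A.erase v) us' := by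
        simp only [decodeAux, hminv]
      refine ⟨u :: us', ?_, ?_, ?_, hcutmem, ?_⟩
      · simp only [List.length_cons, hlen', hcard']
        omega
      · intro x hx
        rcases List.mem_cons.1 hx with h | h
        · rw [h]; exact huA
        · exact Finset.mem_of_mem_erase (hmem' x h)
      · intro hne
        by_cases hus' : us' = []
        · subst hus'
          have h1 : (A.erase v).card = 1 := by
            simp only [List.length_nil] at hlen'
            omega
          obtain ⟨a, ha⟩ := Finset.card_eq_one.1 h1
          have h2 : u = a := by rw [ha] at huA'; exact Finset.mem_singleton.1 huA'
          have h3 : z = a := by rw [ha] at hzA'; exact Finset.mem_singleton.1 hzA'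
          simp only [List.getLast_singleton]
          exact h2.trans h3.symm
        · rw [List.getLast_cons hus', hlast' hus', hmax']
      · intro e he
        rw [hd] at he
        rcases List.mem_cons.1 he with h | h
        · rw [h]; exact hRvu
        · exact hdec' e h

/-! ### Probability peeling -/

lemma peel {l : ℕ} {X : Type*} [Fintype X] [Nonempty X] (f : X → ℝ)
    (hf0 : ∀ x, 0 ≤ f x) (hf1 : ∑ x, f x = 1) (B : X → X → Prop)
    [instB : ∀ x y, Decidable (B x y)] (p : ℝ) (hp : 0 ≤ p)
    (hedge : ∀ y : X, f y ≠ 0 → (∑ x, f x * (if B x y then (1:ℝ) else 0)) ≤ p) :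
    ∀ L : List (Fin l × Fin l), GoodL L →
      (∑ ω : Fin l → X, (∏ a, f (ω a)) *
        (L.map (fun e => if B (ω e.1) (ω e.2) then (1:ℝ) else 0)).prod) ≤ p ^ L.length := by
  intro L
  induction L with
  | nil =>
    intro _
    simp only [List.map_nil, List.prod_nil, mul_one, List.length_nil, pow_zero]
    have h := (Fintype.sum_pow f l).symm
    rw [hf1, one_pow] at h
    rw [← h]
  | cons e L ihL =>
    rcases e with ⟨v, u⟩
    intro hG
    obtain ⟨hvu, hfresh, hGL⟩ := hG
    have hu_ne : u ≠ v := Ne.symm hvu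
    set x₀ : X := Classical.arbitrary X with hx₀
    set m : X → ({a : Fin l // a ≠ v} → X) → (Fin l → X) :=
      fun x ρ => (Equiv.funSplitAt v X).symm (x, ρ) with hmdef
    have hmv : ∀ x ρ, m x ρ v = x := fun x ρ =>
      congrArg Prod.fst ((Equiv.funSplitAt v X).apply_symm_apply (x, ρ))
    have hmo : ∀ x ρ a (h : a ≠ v), m x ρ a = ρ ⟨a, h⟩ := fun x ρ a h =>
      congrFun (congrArg Prod.snd ((Equiv.funSplitAt v X).apply_symm_apply (x, ρ))) ⟨a, h⟩
    have hsplit : ∀ g : (Fin l → X) → ℝ, ∑ ω, g ω = ∑ x : X, ∑ ρ, g (m x ρ) := by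
      intro g
      rw [← Equiv.sum_comp (Equiv.funSplitAt v X).symm g, Fintype.sum_prod_type]
    have hprodf : ∀ x ρ, (∏ a, f (m x ρ a)) = f x * ∏ a : {a : Fin l // a ≠ v}, f (ρ a) := by
      intro x ρ
      rw [← Finset.mul_prod_erase Finset.univ _ (Finset.mem_univ v), hmv]
      congr 1
      rw [Finset.prod_subtype (Finset.univ.erase v) (p := fun a => a ≠ v)
        (fun a => by simp) (fun a => f (m x ρ a))]
      apply Finset.prod_congr rfl
      intro a _
      rw [hmo x ρ a a.2]
    have hprodL : ∀ (x y : X) ρ,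
        ((L.map fun e => if B (m x ρ e.1) (m x ρ e.2) then (1:ℝ) else 0)).prod =
        ((L.map fun e => if B (m y ρ e.1) (m y ρ e.2) then (1:ℝ) else 0)).prod := by
      intro x y ρ
      congr 1
      apply List.map_congr_left
      intro e he
      obtain ⟨h1, h2⟩ := hfresh e he
      rw [hmo x ρ e.1 h1, hmo x ρ e.2 h2, hmo y ρ e.1 h1, hmo y ρ e.2 h2]
    set Pr : ({a : Fin l // a ≠ v} → X) → ℝ := fun ρ =>
      (∏ a, f (ρ a)) *
        ((L.map fun e => if B (m x₀ ρ e.1) (m x₀ ρ e.2) then (1:ℝ) else 0)).prod with hPrdef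
    have hPr0 : ∀ ρ, 0 ≤ Pr ρ := by
      intro ρ
      apply mul_nonneg (Finset.prod_nonneg fun a _ => hf0 _)
      apply List.prod_nonneg
      intro t ht
      simp only [List.mem_map] at ht
      obtain ⟨e, _, rfl⟩ := ht
      positivity
    have hLHS : (∑ ω : Fin l → X, (∏ a, f (ω a)) *
          ((((v,u) :: L).map fun e => if B (ω e.1) (ω e.2) then (1:ℝ) else 0)).prod)
        = ∑ ρ, Pr ρ * (∑ x, f x * (if B x (ρ ⟨u, hu_ne⟩) then (1:ℝ) else 0)) := by
      rw [hsplit, Finset.sum_comm]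
      apply Finset.sum_congr rfl
      intro ρ _
      rw [Finset.mul_sum]
      apply Finset.sum_congr rfl
      intro x _
      simp only [List.map_cons, List.prod_cons]
      rw [hprodf, hmv, hmo x ρ u hu_ne, hprodL x x₀ ρ, hPrdef]
      ring
    have hRHS : (∑ ω : Fin l → X, (∏ a, f (ω a)) *
          ((L.map fun e => if B (ω e.1) (ω e.2) then (1:ℝ) else 0)).prod)
        = ∑ ρ, Pr ρ := by
      rw [hsplit, Finset.sum_comm]
      apply Finset.sum_congr rfl
      intro ρ _
      have hterm : ∀ x : X, (∏ a, f (m x ρ a)) *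
          ((L.map fun e => if B (m x ρ e.1) (m x ρ e.2) then (1:ℝ) else 0)).prod
          = f x * Pr ρ := by
        intro x
        rw [hprodf, hprodL x x₀ ρ, hPrdef]
        ring
      rw [Finset.sum_congr rfl fun x _ => hterm x, ← Finset.sum_mul, hf1, one_mul]
    calc (∑ ω : Fin l → X, (∏ a, f (ω a)) *
          ((((v,u) :: L).map fun e => if B (ω e.1) (ω e.2) then (1:ℝ) else 0)).prod)
        = ∑ ρ, Pr ρ * (∑ x, f x * (if B x (ρ ⟨u, hu_ne⟩) then (1:ℝ) else 0)) := hLHS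
      _ ≤ ∑ ρ, Pr ρ * p := by
          apply Finset.sum_le_sum
          intro ρ _
          by_cases hfu : f (ρ ⟨u, hu_ne⟩) = 0
          · have hPrz : Pr ρ = 0 := by
              rw [hPrdef]
              apply mul_eq_zero_of_left
              exact Finset.prod_eq_zero (Finset.mem_univ ⟨u, hu_ne⟩) hfu
            rw [hPrz, zero_mul, zero_mul]
          · exact mul_le_mul_of_nonneg_left (hedge _ hfu) (hPr0 ρ)
      _ = (∑ ρ, Pr ρ) * p := by rw [← Finset.sum_mul]
      _ ≤ p ^ L.length * p := by
          apply mul_le_mul_of_nonneg_right _ hp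
          rw [← hRHS]; exact ihL hGL
      _ = p ^ (((v,u) :: L).length) := by
          rw [List.length_cons, pow_succ]

/-! ### Binomial ratio monotonicity -/

lemma choose_identity (n a b : ℕ) :
    n.choose b * (n - b).choose a = n.choose a * (n - a).choose b := by
  by_cases h : a + b ≤ n
  · have hb : b ≤ a + b := Nat.le_add_left _ _
    have ha : a ≤ a + b := Nat.le_add_right _ _
    have e1 := Nat.choose_mul (n := n) hb
    have e2 := Nat.choose_mul (n := n) ha
    rw [Nat.add_sub_cancel] at e1
    rw [Nat.add_sub_cancel_left] at e2
    have e3 : (a+b).choose b = (a+b).choose a := by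
      rw [← Nat.choose_symm hb]
      congr 1
      omega
    rw [← e1, ← e2, e3]
  · push_neg at h
    by_cases ha : a ≤ n
    · by_cases hbn : b ≤ n
      · have h1 : (n - b).choose a = 0 := Nat.choose_eq_zero_of_lt (by omega)
        have h2 : (n - a).choose b = 0 := Nat.choose_eq_zero_of_lt (by omega)
        rw [h1, h2, Nat.mul_zero, Nat.mul_zero]
      · have h1 : n.choose b = 0 := Nat.choose_eq_zero_of_lt (by omega)
        have h2 : (n - a).choose b = 0 := Nat.choose_eq_zero_of_lt (by omega)
        rw [h1, h2]; ring
    · have h1 : n.choose a = 0 := Nat.choose_eq_zero_of_lt (by omega)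
      have h2 : (n - b).choose a = 0 := Nat.choose_eq_zero_of_lt (by omega)
      rw [h1, h2]; ring

lemma ratio {P KM k₁ k₂ : ℕ} (h1 : k₁ ≤ KM) (h2 : k₂ ≤ KM) (hP : KM ≤ P) :
    ((P - KM).choose KM : ℝ) / (P.choose KM : ℝ) ≤
      ((P - k₁).choose k₂ : ℝ) / (P.choose k₂ : ℝ) := by
  have hM0 : (0:ℝ) < (P.choose KM : ℝ) := by exact_mod_cast Nat.choose_pos hP
  have hk0 : (0:ℝ) < (P.choose k₂ : ℝ) := by exact_mod_cast Nat.choose_pos (h2.trans hP)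
  calc ((P - KM).choose KM : ℝ) / (P.choose KM : ℝ)
      ≤ ((P - k₂).choose KM : ℝ) / (P.choose KM : ℝ) := by
        gcongr
    _ = ((P - KM).choose k₂ : ℝ) / (P.choose k₂ : ℝ) := by
        rw [div_eq_div_iff hM0.ne' hk0.ne']
        have hid := choose_identity P KM k₂
        have hid' : (P - k₂).choose KM * P.choose k₂ = (P - KM).choose k₂ * P.choose KM := by
          rw [Nat.mul_comm, hid, Nat.mul_comm]
        exact_mod_cast hid'
    _ ≤ ((P - k₁).choose k₂ : ℝ) / (P.choose k₂ : ℝ) := by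
        gcongr

/-! ### The weight function -/

noncomputable def fwt (r P : ℕ) (K : Fin (r+1) → ℕ) (μ : Fin (r+1) → ℝ) :
    Fin (r+1) × Finset (Fin P) → ℝ :=
  fun x => if x.2.card = K x.1 then μ x.1 / (P.choose (K x.1) : ℝ) else 0

lemma fwt_nonneg {r P : ℕ} {K : Fin (r+1) → ℕ} {μ : Fin (r+1) → ℝ} (hμ : ∀ j, 0 < μ j)
    (x : Fin (r+1) × Finset (Fin P)) : 0 ≤ fwt r P K μ x := by
  simp only [fwt]
  split
  · apply div_nonneg (hμ _).le
    positivity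
  · exact le_refl 0

lemma sum_fwt {r P : ℕ} {K : Fin (r+1) → ℕ} {μ : Fin (r+1) → ℝ}
    (hKP : ∀ j, K j ≤ P) (hsum : ∑ j, μ j = 1) :
    ∑ x : Fin (r+1) × Finset (Fin P), fwt r P K μ x = 1 := by
  rw [Fintype.sum_prod_type]
  have hterm : ∀ c : Fin (r+1), ∑ S : Finset (Fin P), fwt r P K μ (c, S) = μ c := by
    intro c
    have h0 : ((P.choose (K c) : ℝ)) ≠ 0 := by
      have := Nat.choose_pos (hKP c)
      positivity
    simp only [fwt]
    rw [Finset.sum_ite, Finset.sum_const, Finset.sum_const_zero, add_zero]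
    have hcard : (Finset.univ.filter fun S : Finset (Fin P) => S.card = K c).card
        = P.choose (K c) := by
      have h1 : (Finset.univ.filter fun S : Finset (Fin P) => S.card = K c)
          = Finset.powersetCard (K c) Finset.univ := by
        rw [Finset.powersetCard_eq_filter, Finset.powerset_univ]
      rw [h1, Finset.card_powersetCard, Finset.card_univ, Fintype.card_fin]
    rw [hcard, nsmul_eq_mul]
    field_simp
  rw [Finset.sum_congr rfl fun c _ => hterm c]
  exact hsum

lemma inner_count {P : ℕ} (S : Finset (Fin P)) (k : ℕ) (c : ℝ) :
    ∑ T : Finset (Fin P), (if T.card = k then c else 0) * (if (T ∩ S) = ∅ then (1:ℝ) else 0)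
      = ((P - S.card).choose k : ℝ) * c := by
  have hcomb : ∀ T : Finset (Fin P),
      (if T.card = k then c else 0) * (if (T ∩ S) = ∅ then (1:ℝ) else 0)
      = if (T.card = k ∧ T ∩ S = ∅) then c else 0 := by
    intro T
    by_cases h1 : T.card = k <;> by_cases h2 : T ∩ S = ∅ <;> simp [h1, h2]
  rw [Finset.sum_congr rfl fun T _ => hcomb T, Finset.sum_ite, Finset.sum_const,
    Finset.sum_const_zero, add_zero]
  have hfilt : (Finset.univ.filter fun T : Finset (Fin P) => T.card = k ∧ T ∩ S = ∅)
      = Finset.powersetCard k Sᶜ := by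
    ext T
    simp only [Finset.mem_filter, Finset.mem_univ, true_and, Finset.mem_powersetCard]
    constructor
    · rintro ⟨h1, h2⟩
      refine ⟨?_, h1⟩
      intro a haT
      rw [Finset.mem_compl]
      intro haS
      have : a ∈ T ∩ S := Finset.mem_inter.2 ⟨haT, haS⟩
      rw [h2] at this
      exact absurd this (Finset.notMem_empty a)
    · rintro ⟨h1, h2⟩
      refine ⟨h2, ?_⟩
      apply Finset.eq_empty_iff_forall_notMem.2
      intro a ha
      obtain ⟨haT, haS⟩ := Finset.mem_inter.1 ha
      exact Finset.mem_compl.1 (h1 haT) haS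
  rw [hfilt, Finset.card_powersetCard, Finset.card_compl, Fintype.card_fin, nsmul_eq_mul]

lemma edge_sum {r P : ℕ} {K : Fin (r+1) → ℕ} {μ : Fin (r+1) → ℝ} (hμ : ∀ j, 0 < μ j)
    (hsum : ∑ j, μ j = 1) (hK : Monotone K) (hKP : ∀ j, K j ≤ P)
    (y : Fin (r+1) × Finset (Fin P)) (hy : fwt r P K μ y ≠ 0) :
    ∑ x : Fin (r+1) × Finset (Fin P), fwt r P K μ x * (if (x.2 ∩ y.2).Nonempty then (1:ℝ) else 0)
      ≤ 1 - ((P - K (Fin.last r)).choose (K (Fin.last r)) : ℝ)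
          / (P.choose (K (Fin.last r)) : ℝ) := by
  have hS : y.2.card = K y.1 := by
    by_contra h
    exact hy (by simp only [fwt]; rw [if_neg h])
  have hSle : y.2.card ≤ K (Fin.last r) := hS ▸ hK (Fin.le_last y.1)
  have hsplit : ∀ x : Fin (r+1) × Finset (Fin P),
      fwt r P K μ x * (if (x.2 ∩ y.2).Nonempty then (1:ℝ) else 0) =
      fwt r P K μ x - fwt r P K μ x * (if (x.2 ∩ y.2) = ∅ then (1:ℝ) else 0) := by
    intro x
    by_cases h : (x.2 ∩ y.2) = ∅
    · rw [if_pos h, if_neg (by rw [h]; exact Finset.not_nonempty_empty)]; ring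
    · rw [if_neg h, if_pos (Finset.nonempty_iff_ne_empty.2 h)]; ring
  rw [Finset.sum_congr rfl fun x _ => hsplit x, Finset.sum_sub_distrib, sum_fwt hKP hsum]
  have hD : ((P - K (Fin.last r)).choose (K (Fin.last r)) : ℝ)
        / (P.choose (K (Fin.last r)) : ℝ)
      ≤ ∑ x : Fin (r+1) × Finset (Fin P),
          fwt r P K μ x * (if (x.2 ∩ y.2) = ∅ then (1:ℝ) else 0) := by
    rw [Fintype.sum_prod_type]
    have hterm : ∀ c : Fin (r+1),
        ∑ T : Finset (Fin P), fwt r P K μ (c, T) * (if (T ∩ y.2) = ∅ then (1:ℝ) else 0)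
        = ((P - y.2.card).choose (K c) : ℝ) * (μ c / (P.choose (K c) : ℝ)) := by
      intro c
      simp only [fwt]
      exact inner_count y.2 (K c) _
    rw [Finset.sum_congr rfl fun c _ => hterm c]
    have hstep : ∀ c : Fin (r+1),
        μ c * (((P - K (Fin.last r)).choose (K (Fin.last r)) : ℝ)
          / (P.choose (K (Fin.last r)) : ℝ))
        ≤ ((P - y.2.card).choose (K c) : ℝ) * (μ c / (P.choose (K c) : ℝ)) := by
      intro c
      have hr := ratio hSle (hK (Fin.le_last c)) (hKP (Fin.last r))
      calc μ c * (((P - K (Fin.last r)).choose (K (Fin.last r)) : ℝ)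
            / (P.choose (K (Fin.last r)) : ℝ))
          ≤ μ c * (((P - y.2.card).choose (K c) : ℝ) / (P.choose (K c) : ℝ)) :=
            mul_le_mul_of_nonneg_left hr (hμ c).le
        _ = ((P - y.2.card).choose (K c) : ℝ) * (μ c / (P.choose (K c) : ℝ)) := by ring
    calc ((P - K (Fin.last r)).choose (K (Fin.last r)) : ℝ)
          / (P.choose (K (Fin.last r)) : ℝ)
        = ∑ c : Fin (r+1), μ c * (((P - K (Fin.last r)).choose (K (Fin.last r)) : ℝ)
            / (P.choose (K (Fin.last r)) : ℝ)) := by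
          rw [← Finset.sum_mul, hsum, one_mul]
      _ ≤ ∑ c : Fin (r+1), ((P - y.2.card).choose (K c) : ℝ) * (μ c / (P.choose (K c) : ℝ)) :=
          Finset.sum_le_sum fun c _ => hstep c
  linarith

end Stmt17

theorem stmt17 (l r P : ℕ) (hl : 1 ≤ l) (K : Fin (r + 1) → ℕ) (μ : Fin (r + 1) → ℝ)
    (hμ : ∀ j, 0 < μ j) (hsum : ∑ j, μ j = 1)
    (hK : Monotone K) (hKP : ∀ j, 0 < K j ∧ K j ≤ P) :
    (∑ ω : Fin l → Fin (r + 1) × Finset (Fin P),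
        (∏ a, if (ω a).2.card = K (ω a).1 then μ (ω a).1 / ((P.choose (K (ω a).1) : ℝ)) else 0) *
          (if (SimpleGraph.fromRel (fun a b => ((ω a).2 ∩ (ω b).2).Nonempty)).Connected
            then 1 else 0)) ≤
      (l : ℝ) ^ (l - 2) *
        (1 - (((P - K (Fin.last r)).choose (K (Fin.last r)) : ℝ)) /
            ((P.choose (K (Fin.last r)) : ℝ))) ^ (l - 1) := by
  have hKP' : ∀ j, K j ≤ P := fun j => (hKP j).2
  set f := Stmt17.fwt r P K μ with hfdef
  have hf0 : ∀ x, 0 ≤ f x := fun x => Stmt17.fwt_nonneg hμ x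
  have hf1 : ∑ x : Fin (r + 1) × Finset (Fin P), f x = 1 := Stmt17.sum_fwt hKP' hsum
  have hq1 : ((P - K (Fin.last r)).choose (K (Fin.last r)) : ℝ)
      / (P.choose (K (Fin.last r)) : ℝ) ≤ 1 := by
    apply div_le_one_of_le₀
    · exact_mod_cast Nat.choose_le_choose _ (Nat.sub_le _ _)
    · positivity
  have hp0 : (0:ℝ) ≤ 1 - ((P - K (Fin.last r)).choose (K (Fin.last r)) : ℝ)
      / (P.choose (K (Fin.last r)) : ℝ) := by linarith
  have hwt : ∀ ω : Fin l → Fin (r + 1) × Finset (Fin P),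
      (∏ a, if (ω a).2.card = K (ω a).1 then μ (ω a).1 / ((P.choose (K (ω a).1) : ℝ)) else 0)
      = ∏ a, f (ω a) := fun ω => rfl
  have htot : ∑ ω : Fin l → Fin (r + 1) × Finset (Fin P), ∏ a, f (ω a) = 1 := by
    have h := (Fintype.sum_pow f l).symm
    rw [hf1, one_pow] at h
    exact h
  rcases Nat.lt_or_ge l 2 with hl2 | hl2
  · -- case l = 1
    have hRHS : ((l:ℝ)) ^ (l - 2) *
        (1 - (((P - K (Fin.last r)).choose (K (Fin.last r)) : ℝ)) /
            ((P.choose (K (Fin.last r)) : ℝ))) ^ (l - 1) = 1 := by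
      have h1 : l = 1 := by omega
      subst h1
      norm_num
    rw [hRHS]
    calc (∑ ω : Fin l → Fin (r + 1) × Finset (Fin P),
        (∏ a, if (ω a).2.card = K (ω a).1 then μ (ω a).1 / ((P.choose (K (ω a).1) : ℝ)) else 0) *
          (if (SimpleGraph.fromRel (fun a b => ((ω a).2 ∩ (ω b).2).Nonempty)).Connected
            then 1 else 0))
        ≤ ∑ ω : Fin l → Fin (r + 1) × Finset (Fin P), ∏ a, f (ω a) := by
          apply Finset.sum_le_sum
          intro ω _
          rw [hwt ω]
          have h0 : (0:ℝ) ≤ ∏ a, f (ω a) := Finset.prod_nonneg fun a _ => hf0 _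
          apply mul_le_of_le_one_right h0
          split_ifs <;> norm_num
      _ = 1 := htot
  · -- case l ≥ 2
    have hl0 : 0 < l := by omega
    set d : Fin l := ⟨0, hl0⟩ with hddef
    have hne : (Finset.univ : Finset (Fin l)).Nonempty := ⟨d, Finset.mem_univ d⟩
    set M : Fin l := (Finset.univ : Finset (Fin l)).max' hne with hMdef
    set Pc : (Fin (l-2) → Fin l) → (Fin l → Fin (r + 1) × Finset (Fin P)) → ℝ := fun s ω =>
      ((Stmt17.decodeAux d Finset.univ (List.ofFn s ++ [M])).map
        (fun e => if ((ω e.1).2 ∩ (ω e.2).2).Nonempty then (1:ℝ) else 0)).prod with hPcdef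
    have hcodelen : ∀ s : Fin (l-2) → Fin l, (List.ofFn s ++ [M]).length = l - 1 := by
      intro s; simp; omega
    have hcodelt : ∀ s : Fin (l-2) → Fin l,
        (List.ofFn s ++ [M]).length < (Finset.univ : Finset (Fin l)).card := by
      intro s; rw [hcodelen s]; simp; omega
    have hPc0 : ∀ s ω, 0 ≤ Pc s ω := by
      intro s ω
      rw [hPcdef]
      apply List.prod_nonneg
      intro t ht
      simp only [List.mem_map] at ht
      obtain ⟨e, _, rfl⟩ := ht
      positivity
    -- peeling bound
    have hpeel : ∀ s : Fin (l-2) → Fin l,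
        (∑ ω : Fin l → Fin (r + 1) × Finset (Fin P), (∏ a, f (ω a)) * Pc s ω)
        ≤ (1 - (((P - K (Fin.last r)).choose (K (Fin.last r)) : ℝ)) /
            ((P.choose (K (Fin.last r)) : ℝ))) ^ (l - 1) := by
      intro s
      have hspec := Stmt17.decode_spec d (List.ofFn s ++ [M]) Finset.univ (hcodelt s)
      have h := Stmt17.peel f hf0 hf1 (fun x y => (x.2 ∩ y.2).Nonempty)
        (1 - (((P - K (Fin.last r)).choose (K (Fin.last r)) : ℝ)) /
            ((P.choose (K (Fin.last r)) : ℝ))) hp0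
        (fun y hy => Stmt17.edge_sum hμ hsum hK hKP' y hy)
        (Stmt17.decodeAux d Finset.univ (List.ofFn s ++ [M])) hspec.2.1
      rw [hspec.1, hcodelen s] at h
      exact h
    -- coverage
    have hcover : ∀ ω : Fin l → Fin (r + 1) × Finset (Fin P),
        (if (SimpleGraph.fromRel (fun a b => ((ω a).2 ∩ (ω b).2).Nonempty)).Connected
            then (1:ℝ) else 0)
        ≤ ∑ s : Fin (l-2) → Fin l, Pc s ω := by
      intro ω
      split_ifs with hconn
      · set G := SimpleGraph.fromRel (fun a b => ((ω a).2 ∩ (ω b).2).Nonempty) with hGdef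
        have hConn : Stmt17.Conn G.Adj (Finset.univ : Finset (Fin l)) := by
          intro x _ y _
          obtain ⟨w⟩ := hconn.preconnected x y
          induction w with
          | nil => exact Relation.ReflTransGen.refl
          | cons h q ihq =>
              exact Relation.ReflTransGen.head
                ⟨h, Finset.mem_univ _, Finset.mem_univ _⟩
                (ihq (Finset.mem_univ _) (Finset.mem_univ _))
        obtain ⟨us, hlen, hmem, hlast, hcut, hdec⟩ :=
          Stmt17.mct (fun _ _ h => G.adj_symm h) (fun x => G.irrefl) d l Finset.univ (by simp) hne hConn
        have hcardu : (Finset.univ : Finset (Fin l)).card = l := by simp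
        rw [hcardu] at hlen
        have husne : us ≠ [] := by
          intro h
          rw [h] at hlen
          simp at hlen
          omega
        have hdl : us.dropLast.length = l - 2 := by
          rw [List.length_dropLast, hlen]
          omega
        set s₀ : Fin (l-2) → Fin l :=
          fun i => us.dropLast[(i : ℕ)]'(by rw [hdl]; exact i.2) with hs₀def
        have hofn : List.ofFn s₀ = us.dropLast := by
          apply List.ext_getElem
          · simp [hdl]
          · intro i h1 h2
            simp [hs₀def]
        have hcodeeq : List.ofFn s₀ ++ [M] = us := by
          rw [hofn, hMdef, ← hlast husne]
          exact List.dropLast_append_getLast husne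
        have hone : Pc s₀ ω = 1 := by
          rw [hPcdef]
          apply List.prod_eq_one
          intro t ht
          simp only [List.mem_map] at ht
          obtain ⟨e, he, rfl⟩ := ht
          rw [hcodeeq] at he
          have hR := hdec e he
          rw [hGdef, SimpleGraph.fromRel_adj] at hR
          rcases hR.2 with h | h
          · exact if_pos h
          · exact if_pos (by rwa [Finset.inter_comm] at h)
        calc (1:ℝ) = Pc s₀ ω := hone.symm
          _ ≤ ∑ s : Fin (l-2) → Fin l, Pc s ω :=
            Finset.single_le_sum (fun s _ => hPc0 s ω) (Finset.mem_univ s₀)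
      · exact Finset.sum_nonneg fun s _ => hPc0 s ω
    -- assemble
    calc (∑ ω : Fin l → Fin (r + 1) × Finset (Fin P),
        (∏ a, if (ω a).2.card = K (ω a).1 then μ (ω a).1 / ((P.choose (K (ω a).1) : ℝ)) else 0) *
          (if (SimpleGraph.fromRel (fun a b => ((ω a).2 ∩ (ω b).2).Nonempty)).Connected
            then 1 else 0))
        ≤ ∑ ω : Fin l → Fin (r + 1) × Finset (Fin P),
            (∏ a, f (ω a)) * ∑ s : Fin (l-2) → Fin l, Pc s ω := by
          apply Finset.sum_le_sum
          intro ω _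
          rw [hwt ω]
          exact mul_le_mul_of_nonneg_left (hcover ω)
            (Finset.prod_nonneg fun a _ => hf0 _)
      _ = ∑ ω : Fin l → Fin (r + 1) × Finset (Fin P),
            ∑ s : Fin (l-2) → Fin l, (∏ a, f (ω a)) * Pc s ω := by
          apply Finset.sum_congr rfl
          intro ω _
          rw [Finset.mul_sum]
      _ = ∑ s : Fin (l-2) → Fin l,
            ∑ ω : Fin l → Fin (r + 1) × Finset (Fin P), (∏ a, f (ω a)) * Pc s ω :=
          Finset.sum_comm
      _ ≤ ∑ s : Fin (l-2) → Fin l,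
            (1 - (((P - K (Fin.last r)).choose (K (Fin.last r)) : ℝ)) /
              ((P.choose (K (Fin.last r)) : ℝ))) ^ (l - 1) :=
          Finset.sum_le_sum fun s _ => hpeel s
      _ = (l : ℝ) ^ (l - 2) *
            (1 - (((P - K (Fin.last r)).choose (K (Fin.last r)) : ℝ)) /
              ((P.choose (K (Fin.last r)) : ℝ))) ^ (l - 1) := by
          rw [Finset.sum_const, Finset.card_univ, Fintype.card_fun, Fintype.card_fin,
            Fintype.card_fin, nsmul_eq_mul, Nat.cast_pow]
end
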